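/- arXiv:1601.06952 — 4 statements merged into one kernel-verified Lean document; each statement's English description precedes it below -/
import Mathlib

section
/- The Hilbert metric on a properly convex open domain Ω is a metric: for p,q ∈ Ω, d_Ω(p,q) = log|[o,s,q,p]| where o,s are the endpoints of the maximal open segment of Ω through p and q (with o,q separating p,s), satisfies the axioms of a metric (nonnegativity, symmetry, identity of indiscernibles, triangle inequality) on Ω. -/
open Set

/-- `d` is the Hilbert distance on the convex open set `Ω`: `d p p = 0`, and for distinct
`p q ∈ Ω`, whenever `o, s` are the boundary endpoints of the maximal segment of `Ω` through
`p` and `q` (with the order `o, p, q, s` on the line), `d p q` is the logarithm of the cross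
ratio `[o,s,q,p]`. -/
def IsHilbertDistOn {n : ℕ} (Ω : Set (EuclideanSpace ℝ (Fin n)))
    (d : EuclideanSpace ℝ (Fin n) → EuclideanSpace ℝ (Fin n) → ℝ) : Prop :=
  (∀ p ∈ Ω, d p p = 0) ∧
  (∀ p ∈ Ω, ∀ q ∈ Ω, p ≠ q → ∀ o s : EuclideanSpace ℝ (Fin n),
    o ∈ frontier Ω → s ∈ frontier Ω →
    p ∈ openSegment ℝ o q → q ∈ openSegment ℝ p s →
    d p q = Real.log ((dist o q / dist o p) * (dist s p / dist s q)))

namespace HilbertAux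

variable {n : ℕ} {Ω : Set (EuclideanSpace ℝ (Fin n))}

noncomputable def sig (Ω : Set (EuclideanSpace ℝ (Fin n))) (p q : EuclideanSpace ℝ (Fin n)) : ℝ :=
  sSup {t : ℝ | p + t • (q - p) ∈ Ω}

lemma chordProps (hopen : IsOpen Ω) (hbd : Bornology.IsBounded Ω) (hconv : Convex ℝ Ω)
    {p q : EuclideanSpace ℝ (Fin n)} (hp : p ∈ Ω) (hq : q ∈ Ω) (hpq : p ≠ q) :
    1 < sig Ω p q ∧ (∀ t : ℝ, 0 ≤ t → t < sig Ω p q → p + t • (q - p) ∈ Ω) ∧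
      (∀ t : ℝ, p + t • (q - p) ∈ Ω → t ≤ sig Ω p q) ∧
      p + sig Ω p q • (q - p) ∈ frontier Ω := by
  set S : Set ℝ := {t : ℝ | p + t • (q - p) ∈ Ω} with hS
  have hqp : q - p ≠ 0 := sub_ne_zero.2 (Ne.symm hpq)
  have hnorm : (0:ℝ) < ‖q - p‖ := norm_pos_iff.2 hqp
  have h0 : (0:ℝ) ∈ S := by simp [hS, hp]
  have h1 : (1:ℝ) ∈ S := by
    have : p + (1:ℝ) • (q - p) = q := by module
    simp [hS, this, hq]
  have hSopen : IsOpen S := by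
    have hcont : Continuous fun t : ℝ => p + t • (q - p) :=
      continuous_const.add (continuous_id.smul continuous_const)
    exact hopen.preimage hcont
  obtain ⟨R, hR⟩ := hbd.exists_norm_le
  have hbdd : BddAbove S := by
    refine ⟨(R + ‖p‖) / ‖q - p‖, fun t ht => ?_⟩
    have h1 : ‖p + t • (q - p)‖ ≤ R := hR _ ht
    have h2 : ‖t • (q - p)‖ ≤ R + ‖p‖ := by
      have := norm_le_norm_add_norm_sub' (p + t • (q - p)) p
      simp only [add_sub_cancel_left] at this
      calc ‖t • (q - p)‖ = ‖p + t • (q - p) - p‖ := by rw [add_sub_cancel_left]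
        _ ≤ ‖p + t • (q - p)‖ + ‖p‖ := norm_sub_le _ _
        _ ≤ R + ‖p‖ := by linarith
    rw [norm_smul, Real.norm_eq_abs] at h2
    have : t ≤ |t| := le_abs_self t
    rw [le_div_iff₀ hnorm]
    nlinarith [abs_nonneg t]
  have hSconv : Convex ℝ S := by
    intro t₁ h₁ t₂ h₂ α β hα hβ hαβ
    have hmem := hconv h₁ h₂ hα hβ hαβ
    have heq : α • (p + t₁ • (q - p)) + β • (p + t₂ • (q - p))
        = p + (α • t₁ + β • t₂) • (q - p) := by
      have h1 : α + β = 1 := hαβ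
      match_scalars <;> simp <;> nlinarith [h1]
    rw [heq] at hmem
    exact hmem
  have hne : S.Nonempty := ⟨0, h0⟩
  set σ := sSup S with hσ
  have hle1 : (1:ℝ) ≤ σ := le_csSup hbdd h1
  have hgt1 : 1 < σ := by
    rcases Metric.isOpen_iff.1 hSopen 1 h1 with ⟨ε, hε, hball⟩
    have hb : (1 + ε/2) ∈ Metric.ball (1:ℝ) ε := by
      rw [Metric.mem_ball, Real.dist_eq]
      have he : (1 + ε/2 - 1) = ε/2 := by ring
      rw [he, abs_of_pos (by linarith)]; linarith
    have := le_csSup hbdd (hball hb)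
    linarith
  have hmemlt : ∀ t : ℝ, 0 ≤ t → t < σ → p + t • (q - p) ∈ Ω := by
    intro t ht0 htσ
    obtain ⟨u, huS, htu⟩ := exists_lt_of_lt_csSup hne htσ
    have hu0 : 0 < u := lt_of_le_of_lt ht0 htu
    have : t ∈ segment ℝ (0:ℝ) u := by
      rw [segment_eq_Icc (le_of_lt hu0)]
      exact ⟨ht0, le_of_lt htu⟩
    exact hSconv.segment_subset h0 huS this
  have hub : ∀ t : ℝ, p + t • (q - p) ∈ Ω → t ≤ σ := fun t ht => le_csSup hbdd ht
  have hfr : p + σ • (q - p) ∈ frontier Ω := by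
    rw [hopen.frontier_eq]
    constructor
    · have hσcl : σ ∈ closure S := csSup_mem_closure hne hbdd
      have hcont : Continuous fun t : ℝ => p + t • (q - p) :=
        continuous_const.add (continuous_id.smul continuous_const)
      exact map_mem_closure (f := fun t : ℝ => p + t • (q - p)) hcont hσcl (fun t ht => ht)
    · intro hmem
      rcases Metric.isOpen_iff.1 hSopen σ hmem with ⟨ε, hε, hball⟩
      have hb : (σ + ε/2) ∈ Metric.ball σ ε := by
        rw [Metric.mem_ball, Real.dist_eq]
        have he : (σ + ε/2 - σ) = ε/2 := by ring
        rw [he, abs_of_pos (by linarith)]; linarith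
      have := le_csSup hbdd (hball hb)
      linarith
  exact ⟨hgt1, hmemlt, hub, hfr⟩


lemma combo (hconv : Convex ℝ Ω) {p q r : EuclideanSpace ℝ (Fin n)}
    {a b : ℝ} (ha : 1 < a) (hb : 1 < b)
    (hA : p + a • (q - p) ∈ Ω) (hB : q + b • (r - q) ∈ Ω) :
    p + (a * b / (a + b - 1)) • (r - p) ∈ Ω := by
  have hab : 0 < a + b - 1 := by linarith
  have hmem := hconv hA hB (a := (b-1)/(a+b-1)) (b := a/(a+b-1))
    (div_nonneg (by linarith) (by linarith)) (div_nonneg (by linarith) (by linarith))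
    (by field_simp; ring)
  have heq : ((b-1)/(a+b-1)) • (p + a • (q - p)) + (a/(a+b-1)) • (q + b • (r - q))
      = p + (a * b / (a + b - 1)) • (r - p) := by
    match_scalars <;> field_simp <;> ring
  rw [heq] at hmem
  exact hmem

lemma dist_eq (hopen : IsOpen Ω) (hbd : Bornology.IsBounded Ω) (hconv : Convex ℝ Ω)
    {d : EuclideanSpace ℝ (Fin n) → EuclideanSpace ℝ (Fin n) → ℝ}
    (hd : IsHilbertDistOn Ω d)
    {p q : EuclideanSpace ℝ (Fin n)} (hp : p ∈ Ω) (hq : q ∈ Ω) (hpq : p ≠ q) :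
    d p q = Real.log ((sig Ω q p / (sig Ω q p - 1)) * (sig Ω p q / (sig Ω p q - 1))) := by
  obtain ⟨hσ1, hσmem, hσle, hσfr⟩ := chordProps hopen hbd hconv hp hq hpq
  obtain ⟨hτ1, hτmem, hτle, hτfr⟩ := chordProps hopen hbd hconv hq hp hpq.symm
  set σ := sig Ω p q with hσdef
  set τ := sig Ω q p with hτdef
  have hτ0 : (0:ℝ) < τ := by linarith
  have hσ0 : (0:ℝ) < σ := by linarith
  have hnorm : (0:ℝ) < ‖p - q‖ := norm_pos_iff.2 (sub_ne_zero.2 hpq)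
  have hnorm' : ‖q - p‖ = ‖p - q‖ := norm_sub_rev q p
  have hmo : p ∈ openSegment ℝ (q + τ • (p - q)) q := by
    refine ⟨1/τ, 1 - 1/τ, by positivity, by
      have : 1/τ < 1 := by rw [div_lt_one hτ0]; linarith
      linarith, by ring, ?_⟩
    match_scalars <;> field_simp <;> ring
  have hms : q ∈ openSegment ℝ p (p + σ • (q - p)) := by
    refine ⟨1 - 1/σ, 1/σ, by
      have : 1/σ < 1 := by rw [div_lt_one hσ0]; linarith
      linarith, by positivity, by ring, ?_⟩
    match_scalars <;> field_simp <;> ring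
  have h1 := hd.2 p hp q hq hpq (q + τ • (p - q)) (p + σ • (q - p)) hτfr hσfr hmo hms
  rw [h1]
  congr 1
  have e1 : dist (q + τ • (p - q)) q = τ * ‖p - q‖ := by
    rw [dist_eq_norm]
    have : q + τ • (p - q) - q = τ • (p - q) := by module
    rw [this, norm_smul, Real.norm_eq_abs, abs_of_pos hτ0]
  have e2 : dist (q + τ • (p - q)) p = (τ - 1) * ‖p - q‖ := by
    rw [dist_eq_norm]
    have : q + τ • (p - q) - p = (τ - 1) • (p - q) := by module
    rw [this, norm_smul, Real.norm_eq_abs, abs_of_pos (by linarith)]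
  have e3 : dist (p + σ • (q - p)) p = σ * ‖p - q‖ := by
    rw [dist_eq_norm]
    have : p + σ • (q - p) - p = σ • (q - p) := by module
    rw [this, norm_smul, Real.norm_eq_abs, abs_of_pos hσ0, hnorm']
  have e4 : dist (p + σ • (q - p)) q = (σ - 1) * ‖p - q‖ := by
    rw [dist_eq_norm]
    have : p + σ • (q - p) - q = (σ - 1) • (q - p) := by module
    rw [this, norm_smul, Real.norm_eq_abs, abs_of_pos (by linarith), hnorm']
  rw [e1, e2, e3, e4]
  have h2 : τ - 1 ≠ 0 := by linarith
  have h3 : σ - 1 ≠ 0 := by linarith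
  field_simp

lemma sig_triangle (hopen : IsOpen Ω) (hbd : Bornology.IsBounded Ω) (hconv : Convex ℝ Ω)
    {p q r : EuclideanSpace ℝ (Fin n)} (hp : p ∈ Ω) (hq : q ∈ Ω) (hr : r ∈ Ω)
    (hpq : p ≠ q) (hqr : q ≠ r) (hpr : p ≠ r) :
    sig Ω p q * sig Ω q r / (sig Ω p q + sig Ω q r - 1) ≤ sig Ω p r := by
  obtain ⟨ha1, haMem, haLe, _⟩ := chordProps hopen hbd hconv hp hq hpq
  obtain ⟨hb1, hbMem, hbLe, _⟩ := chordProps hopen hbd hconv hq hr hqr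
  obtain ⟨hc1, hcMem, hcLe, _⟩ := chordProps hopen hbd hconv hp hr hpr
  set a := sig Ω p q
  set b := sig Ω q r
  set c := sig Ω p r
  have key : ∀ δ : ℝ, 0 < δ → δ < min (a - 1) (b - 1) →
      (a - δ) * (b - δ) / ((a - δ) + (b - δ) - 1) ≤ c := by
    intro δ hδ0 hδm
    have hδa : δ < a - 1 := lt_of_lt_of_le hδm (min_le_left _ _)
    have hδb : δ < b - 1 := lt_of_lt_of_le hδm (min_le_right _ _)
    have hA : p + (a - δ) • (q - p) ∈ Ω := haMem _ (by linarith) (by linarith)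
    have hB : q + (b - δ) • (r - q) ∈ Ω := hbMem _ (by linarith) (by linarith)
    have := combo hconv (show 1 < a - δ by linarith) (show 1 < b - δ by linarith) hA hB
    exact hcLe _ this
  have hden : a + b - 1 ≠ 0 := by intro h; nlinarith
  have hca : ContinuousAt (fun δ : ℝ => (a - δ) * (b - δ) / ((a - δ) + (b - δ) - 1)) 0 := by
    apply ContinuousAt.div
    · fun_prop
    · fun_prop
    · simpa using hden
  have htend : Filter.Tendsto (fun δ : ℝ => (a - δ) * (b - δ) / ((a - δ) + (b - δ) - 1))
      (nhdsWithin 0 (Set.Ioi 0)) (nhds (a * b / (a + b - 1))) := by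
    have h0 : (a - 0) * (b - 0) / ((a - 0) + (b - 0) - 1) = a * b / (a + b - 1) := by norm_num
    have := hca.tendsto
    rw [h0] at this
    exact this.mono_left nhdsWithin_le_nhds
  refine le_of_tendsto htend ?_
  have hmemIoo : Set.Ioo (0:ℝ) (min (a - 1) (b - 1)) ∈ nhdsWithin (0:ℝ) (Set.Ioi 0) := by
    exact Ioo_mem_nhdsGT_of_mem ⟨le_refl _, lt_min (by linarith) (by linarith)⟩
  filter_upwards [hmemIoo] with δ hδ
  exact key δ hδ.1 hδ.2

lemma funk_mul {a b c : ℝ} (ha : 1 < a) (hb : 1 < b) (hc : 1 < c)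
    (h : a * b / (a + b - 1) ≤ c) :
    c / (c - 1) ≤ (a / (a - 1)) * (b / (b - 1)) := by
  have hab : (0:ℝ) < a + b - 1 := by linarith
  have h' : a * b ≤ c * (a + b - 1) := by
    rw [div_le_iff₀ hab] at h; linarith
  rw [div_mul_div_comm, div_le_div_iff₀ (by linarith) (mul_pos (by linarith) (by linarith) : (0:ℝ) < (a-1)*(b-1))]
  nlinarith

end HilbertAux

/-- The Hilbert metric on a properly convex open domain (a bounded convex open subset of an
affine chart, modelled here in Euclidean space) satisfies the axioms of a metric on `Ω`:
nonnegativity, symmetry, identity of indiscernibles, and the triangle inequality. -/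
theorem hilbert_dist_is_metric {n : ℕ} (Ω : Set (EuclideanSpace ℝ (Fin n)))
    (hopen : IsOpen Ω) (hbd : Bornology.IsBounded Ω) (hconv : Convex ℝ Ω) (hne : Ω.Nonempty)
    (d : EuclideanSpace ℝ (Fin n) → EuclideanSpace ℝ (Fin n) → ℝ)
    (hd : IsHilbertDistOn Ω d) :
    (∀ p ∈ Ω, ∀ q ∈ Ω, 0 ≤ d p q) ∧
    (∀ p ∈ Ω, ∀ q ∈ Ω, d p q = d q p) ∧
    (∀ p ∈ Ω, ∀ q ∈ Ω, (d p q = 0 ↔ p = q)) ∧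
    (∀ p ∈ Ω, ∀ q ∈ Ω, ∀ r ∈ Ω, d p r ≤ d p q + d q r) := by
  open HilbertAux in
  have hone : ∀ p ∈ Ω, ∀ q ∈ Ω, p ≠ q → 1 < sig Ω p q := fun p hp q hq hpq =>
    (chordProps hopen hbd hconv hp hq hpq).1
  have hfun : ∀ p ∈ Ω, ∀ q ∈ Ω, p ≠ q →
      d p q = Real.log ((sig Ω q p / (sig Ω q p - 1)) * (sig Ω p q / (sig Ω p q - 1))) :=
    fun p hp q hq hpq => dist_eq hopen hbd hconv hd hp hq hpq
  have harg : ∀ p ∈ Ω, ∀ q ∈ Ω, p ≠ q →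
      1 < (sig Ω q p / (sig Ω q p - 1)) * (sig Ω p q / (sig Ω p q - 1)) := by
    intro p hp q hq hpq
    have h1 := hone p hp q hq hpq
    have h2 := hone q hq p hp (Ne.symm hpq)
    have e1 : 1 < sig Ω q p / (sig Ω q p - 1) := by
      rw [lt_div_iff₀ (by linarith)]; linarith
    have e2 : 1 < sig Ω p q / (sig Ω p q - 1) := by
      rw [lt_div_iff₀ (by linarith)]; linarith
    nlinarith
  have hpos : ∀ p ∈ Ω, ∀ q ∈ Ω, p ≠ q → 0 < d p q := by
    intro p hp q hq hpq
    rw [hfun p hp q hq hpq]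
    exact Real.log_pos (harg p hp q hq hpq)
  have hnonneg : ∀ p ∈ Ω, ∀ q ∈ Ω, 0 ≤ d p q := by
    intro p hp q hq
    by_cases h : p = q
    · subst h; rw [hd.1 p hp]
    · exact le_of_lt (hpos p hp q hq h)
  refine ⟨hnonneg, ?_, ?_, ?_⟩
  · intro p hp q hq
    by_cases h : p = q
    · subst h; rfl
    · rw [hfun p hp q hq h, hfun q hq p hp (Ne.symm h), mul_comm]
  · intro p hp q hq
    constructor
    · intro h0
      by_contra h
      exact absurd h0 (ne_of_gt (hpos p hp q hq h))
    · intro h; subst h; exact hd.1 p hp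
  · intro p hp q hq r hr
    by_cases hpr : p = r
    · subst hpr
      rw [hd.1 p hp]
      have := hnonneg p hp q hq
      by_cases hpq : p = q
      · subst hpq; rw [hd.1 p hp]; linarith
      · have h2 := hpos q hq p hp (Ne.symm hpq)
        have h1 := hpos p hp q hq hpq
        linarith
    by_cases hpq : p = q
    · subst hpq; rw [hd.1 p hp]; linarith [le_refl (d p r)]
    by_cases hqr : q = r
    · subst hqr; rw [hd.1 q hq]; linarith [le_refl (d p q)]
    -- main case
    have ha1 := hone p hp q hq hpq
    have ha1' := hone q hq p hp (Ne.symm hpq)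
    have hb1 := hone q hq r hr hqr
    have hb1' := hone r hr q hq (Ne.symm hqr)
    have hc1 := hone p hp r hr hpr
    have hc1' := hone r hr p hp (Ne.symm hpr)
    set a := sig Ω p q
    set a' := sig Ω q p
    set b := sig Ω q r
    set b' := sig Ω r q
    set c := sig Ω p r
    set c' := sig Ω r p
    have htr1 := sig_triangle hopen hbd hconv hp hq hr hpq hqr hpr
    have htr2 := sig_triangle hopen hbd hconv hr hq hp (Ne.symm hqr) (Ne.symm hpq) (Ne.symm hpr)
    have hfc : c / (c - 1) ≤ (a / (a - 1)) * (b / (b - 1)) :=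
      funk_mul ha1 hb1 hc1 htr1
    have hfc' : c' / (c' - 1) ≤ (b' / (b' - 1)) * (a' / (a' - 1)) :=
      funk_mul hb1' ha1' hc1' htr2
    rw [hfun p hp r hr hpr, hfun p hp q hq hpq, hfun q hq r hr hqr]
    have dpos : ∀ x : ℝ, 1 < x → (0:ℝ) < x / (x - 1) := fun x hx =>
      div_pos (by linarith) (by linarith)
    have hposc : (0:ℝ) < c' / (c' - 1) * (c / (c - 1)) :=
      mul_pos (dpos _ hc1') (dpos _ hc1)
    have hhh : c' / (c' - 1) * (c / (c - 1)) ≤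
        (a' / (a' - 1) * (a / (a - 1))) * (b' / (b' - 1) * (b / (b - 1))) := by
      have h1 : (0:ℝ) ≤ c / (c - 1) := le_of_lt (dpos _ hc1)
      have h2 : (0:ℝ) ≤ b' / (b' - 1) * (a' / (a' - 1)) :=
        le_of_lt (mul_pos (dpos _ hb1') (dpos _ ha1'))
      calc c' / (c' - 1) * (c / (c - 1))
          ≤ (b' / (b' - 1) * (a' / (a' - 1))) * ((a / (a - 1)) * (b / (b - 1))) :=
            mul_le_mul hfc' hfc h1 h2
        _ = (a' / (a' - 1) * (a / (a - 1))) * (b' / (b' - 1) * (b / (b - 1))) := by ring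
    calc Real.log (c' / (c' - 1) * (c / (c - 1)))
        ≤ Real.log ((a' / (a' - 1) * (a / (a - 1))) * (b' / (b' - 1) * (b / (b - 1)))) :=
          Real.log_le_log hposc hhh
      _ = Real.log (a' / (a' - 1) * (a / (a - 1))) + Real.log (b' / (b' - 1) * (b / (b - 1))) := by
          rw [Real.log_mul (ne_of_gt (mul_pos (dpos _ ha1') (dpos _ ha1)))
            (ne_of_gt (mul_pos (dpos _ hb1') (dpos _ hb1)))]
end

section
/- Hilbert metrics converge under geometric convergence: if properly convex compact domains K_i converge geometrically to a properly convex compact domain K, and x_i ∈ K_i°, y_i ∈ K_i° converge to x, y ∈ K° respectively, then d_{K_i°}(x_i, y_i) → d_{K°}(x, y), where d denotes the Hilbert metric of the respective open domain. -/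
open Set Filter Topology

section Aux

variable {n : ℕ}

/-- The set of parameters `t` such that `p + t • (q - p)` lies in `K`. -/
def lineS (K : Set (EuclideanSpace ℝ (Fin n))) (p q : EuclideanSpace ℝ (Fin n)) : Set ℝ :=
  {t : ℝ | p + t • (q - p) ∈ K}

/-- The supremal parameter of the chord of `K` through `p`, `q`. -/
noncomputable def chordT (K : Set (EuclideanSpace ℝ (Fin n))) (p q : EuclideanSpace ℝ (Fin n)) :
    ℝ := sSup (lineS K p q)

/-- The endpoint, beyond `q`, of the chord of `K` through `p`, `q`. -/
noncomputable def chordEnd (K : Set (EuclideanSpace ℝ (Fin n)))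
    (p q : EuclideanSpace ℝ (Fin n)) : EuclideanSpace ℝ (Fin n) :=
  p + chordT K p q • (q - p)

lemma lineS_convex {K : Set (EuclideanSpace ℝ (Fin n))} (hK : Convex ℝ K)
    (p q : EuclideanSpace ℝ (Fin n)) : Convex ℝ (lineS K p q) := by
  intro t1 h1 t2 h2 a b ha hb hab
  have key : p + (a • t1 + b • t2) • (q - p)
      = a • (p + t1 • (q - p)) + b • (p + t2 • (q - p)) + (1 - (a + b)) • p := by
    simp only [smul_eq_mul]
    module
  have : p + (a • t1 + b • t2) • (q - p)
      = a • (p + t1 • (q - p)) + b • (p + t2 • (q - p)) := by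
    rw [key, hab]; simp
  show p + (a • t1 + b • t2) • (q - p) ∈ K
  rw [this]
  exact hK h1 h2 ha hb hab

lemma lineS_isClosed {K : Set (EuclideanSpace ℝ (Fin n))} (hK : IsClosed K)
    (p q : EuclideanSpace ℝ (Fin n)) : IsClosed (lineS K p q) :=
  hK.preimage (by fun_prop)

lemma lineS_bddAbove {K : Set (EuclideanSpace ℝ (Fin n))} (hK : Bornology.IsBounded K)
    {p q : EuclideanSpace ℝ (Fin n)} (hpq : p ≠ q) : BddAbove (lineS K p q) := by
  obtain ⟨R, hR⟩ := (Metric.isBounded_iff_subset_closedBall (0 : EuclideanSpace ℝ (Fin n))).1 hK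
  have hqp : (0:ℝ) < ‖q - p‖ := by
    rw [norm_pos_iff, sub_ne_zero]; exact fun h => hpq h.symm
  refine ⟨(R + ‖p‖) / ‖q - p‖, fun t ht => ?_⟩
  have h1 : ‖p + t • (q - p)‖ ≤ R := by
    have := hR ht
    simpa [Metric.mem_closedBall, dist_eq_norm] using this
  have h2 : |t| * ‖q - p‖ ≤ R + ‖p‖ := by
    calc |t| * ‖q - p‖ = ‖t • (q - p)‖ := by rw [norm_smul, Real.norm_eq_abs]
    _ = ‖(p + t • (q - p)) - p‖ := by congr 1; abel
    _ ≤ ‖p + t • (q - p)‖ + ‖p‖ := norm_sub_le _ _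
    _ ≤ R + ‖p‖ := by linarith
  calc t ≤ |t| := le_abs_self t
  _ ≤ (R + ‖p‖) / ‖q - p‖ := (le_div_iff₀ hqp).2 h2

lemma one_mem_lineS {K : Set (EuclideanSpace ℝ (Fin n))} {p q : EuclideanSpace ℝ (Fin n)}
    (hq : q ∈ K) : (1:ℝ) ∈ lineS K p q := by
  show p + (1:ℝ) • (q - p) ∈ K
  simpa using hq

lemma zero_mem_lineS {K : Set (EuclideanSpace ℝ (Fin n))} {p q : EuclideanSpace ℝ (Fin n)}
    (hp : p ∈ K) : (0:ℝ) ∈ lineS K p q := by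
  show p + (0:ℝ) • (q - p) ∈ K
  simpa using hp

lemma chordT_mem_lineS {K : Set (EuclideanSpace ℝ (Fin n))} (hKc : IsCompact K)
    {p q : EuclideanSpace ℝ (Fin n)} (hq : q ∈ K) (hpq : p ≠ q) :
    chordT K p q ∈ lineS K p q :=
  (lineS_isClosed hKc.isClosed p q).csSup_mem ⟨1, one_mem_lineS hq⟩
    (lineS_bddAbove hKc.isBounded hpq)

lemma chordEnd_mem {K : Set (EuclideanSpace ℝ (Fin n))} (hKc : IsCompact K)
    {p q : EuclideanSpace ℝ (Fin n)} (hq : q ∈ K) (hpq : p ≠ q) : chordEnd K p q ∈ K :=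
  chordT_mem_lineS hKc hq hpq

lemma one_lt_chordT {K : Set (EuclideanSpace ℝ (Fin n))} (hKc : IsCompact K)
    {p q : EuclideanSpace ℝ (Fin n)} (hq : q ∈ interior K) (hpq : p ≠ q) :
    1 < chordT K p q := by
  have hcont : Continuous (fun t : ℝ => p + t • (q - p)) := by fun_prop
  have hop : IsOpen ((fun t : ℝ => p + t • (q - p)) ⁻¹' interior K) :=
    isOpen_interior.preimage hcont
  have h1 : (1:ℝ) ∈ (fun t : ℝ => p + t • (q - p)) ⁻¹' interior K := by
    show p + (1:ℝ) • (q - p) ∈ interior K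
    simpa using hq
  obtain ⟨δ, hδ, hball⟩ := Metric.isOpen_iff.1 hop 1 h1
  have hmem : 1 + δ/2 ∈ lineS K p q := by
    have hb2 : (1 + δ/2 : ℝ) ∈ Metric.ball (1:ℝ) δ := by
      rw [Metric.mem_ball, Real.dist_eq, show (1 + δ/2 - 1 : ℝ) = δ/2 by ring,
        abs_of_nonneg (by linarith)]
      linarith
    have h3 : p + (1 + δ/2) • (q - p) ∈ interior K := hball hb2
    show p + _ • (q - p) ∈ K
    exact interior_subset h3
  have : 1 + δ/2 ≤ chordT K p q := le_csSup (lineS_bddAbove hKc.isBounded hpq) hmem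
  have hδ2 : (0:ℝ) < δ/2 := by linarith
  calc (1:ℝ) < 1 + δ/2 := by linarith
  _ ≤ chordT K p q := this

lemma chordT_lt_of_not_mem {K : Set (EuclideanSpace ℝ (Fin n))}
    {p q : EuclideanSpace ℝ (Fin n)} {a : ℝ}
    (hb : BddAbove (lineS K p q)) (h : chordT K p q < a) : p + a • (q - p) ∉ K :=
  fun hmem => absurd (le_csSup hb hmem) (not_le.2 h)

lemma chordEnd_not_mem_interior {K : Set (EuclideanSpace ℝ (Fin n))} (hKc : IsCompact K)
    {p q : EuclideanSpace ℝ (Fin n)} (hpq : p ≠ q) :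
    chordEnd K p q ∉ interior K := by
  intro hmem
  have hcont : Continuous (fun t : ℝ => p + t • (q - p)) := by fun_prop
  have hop : IsOpen ((fun t : ℝ => p + t • (q - p)) ⁻¹' interior K) :=
    isOpen_interior.preimage hcont
  obtain ⟨δ, hδ, hball⟩ := Metric.isOpen_iff.1 hop _ hmem
  have hmem2 : chordT K p q + δ/2 ∈ lineS K p q := by
    have hb2 : (chordT K p q + δ/2 : ℝ) ∈ Metric.ball (chordT K p q) δ := by
      rw [Metric.mem_ball, Real.dist_eq, show (chordT K p q + δ/2 - chordT K p q : ℝ) = δ/2 by ring,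
        abs_of_nonneg (by linarith)]
      linarith
    have h3 : p + (chordT K p q + δ/2) • (q - p) ∈ interior K := hball hb2
    show p + _ • (q - p) ∈ K
    exact interior_subset h3
  have : chordT K p q + δ/2 ≤ chordT K p q := le_csSup (lineS_bddAbove hKc.isBounded hpq) hmem2
  linarith

lemma mem_openSegment_chordEnd {K : Set (EuclideanSpace ℝ (Fin n))} (hKc : IsCompact K)
    {p q : EuclideanSpace ℝ (Fin n)} (hq : q ∈ interior K) (hpq : p ≠ q) :
    q ∈ openSegment ℝ p (chordEnd K p q) := by
  set T := chordT K p q with hT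
  have hT1 : 1 < T := one_lt_chordT hKc hq hpq
  have hT0 : T ≠ 0 := by intro h; rw [h] at hT1; norm_num at hT1
  refine ⟨1 - 1/T, 1/T, ?_, ?_, by ring, ?_⟩
  · have : 1/T < 1 := by
      rw [div_lt_one (by linarith)]; linarith
    linarith
  · positivity
  · have key : (1 - 1/T) • p + (1/T) • (p + T • (q - p)) = p + ((1/T) * T) • (q - p) := by
      module
    rw [chordEnd, ← hT, key, one_div, inv_mul_cancel₀ hT0, one_smul]
    abel

lemma chordEnd_mem_frontier {K : Set (EuclideanSpace ℝ (Fin n))} (hKc : IsCompact K)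
    (hKconv : Convex ℝ K) {p q : EuclideanSpace ℝ (Fin n)} (hp : p ∈ interior K)
    (hq : q ∈ interior K) (hpq : p ≠ q) :
    chordEnd K p q ∈ frontier (interior K) := by
  have hmem : chordEnd K p q ∈ K := chordEnd_mem hKc (interior_subset hq) hpq
  have hsub : openSegment ℝ p (chordEnd K p q) ⊆ interior K :=
    hKconv.openSegment_interior_closure_subset_interior hp (subset_closure hmem)
  have hclos : chordEnd K p q ∈ closure (interior K) := by
    have h1 : chordEnd K p q ∈ closure (openSegment ℝ p (chordEnd K p q)) := by
      rw [closure_openSegment]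
      exact right_mem_segment ℝ _ _
    exact closure_mono hsub h1
  rw [frontier, isOpen_interior.interior_eq]
  exact ⟨hclos, chordEnd_not_mem_interior hKc hpq⟩

lemma ball_subset_of_hausdorffDist_lt {C L : Set (EuclideanSpace ℝ (Fin n))}
    (hC : IsCompact C) (hCconv : Convex ℝ C) (hCne : C.Nonempty)
    (hLb : Bornology.IsBounded L) {z : EuclideanSpace ℝ (Fin n)} {r ε : ℝ} (hε : 0 < ε)
    (hball : Metric.ball z r ⊆ L) (hH : Metric.hausdorffDist L C < ε) :
    Metric.ball z (r - 2*ε) ⊆ C := by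
  intro w hw
  by_contra hwC
  rw [Metric.mem_ball, dist_comm] at hw
  obtain ⟨c, hc, hdist⟩ := hC.exists_infDist_eq_dist hCne w
  have hwc : w ≠ c := fun h => hwC (h ▸ hc)
  have hd : (0:ℝ) < ‖w - c‖ := by rw [norm_pos_iff, sub_ne_zero]; exact hwc
  have hinf : ‖w - c‖ = ⨅ p : C, ‖w - (p : EuclideanSpace ℝ (Fin n))‖ := by
    rw [← dist_eq_norm, ← hdist, Metric.infDist_eq_iInf]
    simp_rw [dist_eq_norm]
  have hproj : ∀ p ∈ C, inner ℝ (w - c) (p - c) ≤ (0:ℝ) :=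
    (norm_eq_iInf_iff_real_inner_le_zero hCconv hc).1 hinf
  set u : EuclideanSpace ℝ (Fin n) := ‖w - c‖⁻¹ • (w - c) with hu
  have hnu : ‖u‖ = 1 := by
    rw [hu, norm_smul, norm_inv, norm_norm, inv_mul_cancel₀ hd.ne']
  set v : EuclideanSpace ℝ (Fin n) := w + (2*ε) • u with hv
  have hvL : v ∈ L := by
    apply hball
    rw [Metric.mem_ball]
    calc dist v z ≤ dist v w + dist w z := dist_triangle _ _ _
    _ = ‖(2*ε) • u‖ + dist w z := by rw [hv, dist_self_add_left]
    _ = 2*ε + dist w z := by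
        rw [norm_smul, hnu, mul_one, Real.norm_eq_abs, abs_of_pos (by linarith)]
    _ < 2*ε + (r - 2*ε) := by rw [dist_comm]; linarith
    _ = r := by ring
  have hkey : ∀ p ∈ C, ‖w - c‖ + 2*ε ≤ dist v p := by
    intro p hp
    have hvp : v - p = (w - c) + (2*ε) • u + (c - p) := by rw [hv]; abel
    have hiu : (inner ℝ (w - c) u : ℝ) = ‖w - c‖ := by
      rw [hu, real_inner_smul_right, real_inner_self_eq_norm_sq]
      field_simp
    have huu : (inner ℝ u u : ℝ) = 1 := by
      rw [real_inner_self_eq_norm_sq, hnu]; norm_num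
    have hcp : (0:ℝ) ≤ (inner ℝ (c - p) u : ℝ) := by
      rw [hu, real_inner_smul_right]
      have h1 : (inner ℝ (c - p) (w - c) : ℝ) = -(inner ℝ (w - c) (p - c) : ℝ) := by
        rw [real_inner_comm, show c - p = -(p - c) from by abel, inner_neg_right]
      rw [h1]
      have h4 : (0:ℝ) ≤ -(inner ℝ (w - c) (p - c) : ℝ) := by linarith [hproj p hp]
      positivity
    have hinner : (inner ℝ (v - p) u : ℝ)
        = inner ℝ (w - c) u + (2*ε) * inner ℝ u u + inner ℝ (c - p) u := by
      rw [hvp, inner_add_left, inner_add_left, real_inner_smul_left]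
    calc ‖w - c‖ + 2*ε ≤ (inner ℝ (v - p) u : ℝ) := by
          rw [hinner, hiu, huu]; linarith
    _ ≤ ‖v - p‖ * ‖u‖ := real_inner_le_norm _ _
    _ = dist v p := by rw [hnu, mul_one, dist_eq_norm]
  obtain ⟨c', hc', hdist'⟩ := hC.exists_infDist_eq_dist hCne v
  have h5 : ‖w - c‖ + 2*ε ≤ Metric.infDist v C := by rw [hdist']; exact hkey c' hc'
  have h6 : Metric.infDist v C ≤ Metric.hausdorffDist L C :=
    Metric.infDist_le_hausdorffDist_of_mem hvL
      (Metric.hausdorffEdist_ne_top_of_nonempty_of_bounded ⟨v, hvL⟩ hCne hLb hC.isBounded)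
  linarith

lemma chordT_tendsto
    {K : ℕ → Set (EuclideanSpace ℝ (Fin n))} {L : Set (EuclideanSpace ℝ (Fin n))}
    (hKc : ∀ i, IsCompact (K i)) (hKconv : ∀ i, Convex ℝ (K i))
    (hLc : IsCompact L) (hLconv : Convex ℝ L)
    (hgc : Tendsto (fun i => Metric.hausdorffDist (K i) L) atTop (𝓝 0))
    {x y : ℕ → EuclideanSpace ℝ (Fin n)} {x₀ y₀ : EuclideanSpace ℝ (Fin n)}
    (hx : ∀ i, x i ∈ K i) (hy : ∀ i, y i ∈ interior (K i))
    (hx₀ : x₀ ∈ interior L) (hy₀ : y₀ ∈ interior L)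
    (hxlim : Tendsto x atTop (𝓝 x₀)) (hylim : Tendsto y atTop (𝓝 y₀)) (hne : x₀ ≠ y₀) :
    Tendsto (fun i => chordT (K i) (x i) (y i)) atTop (𝓝 (chordT L x₀ y₀)) := by
  have hLne : L.Nonempty := ⟨x₀, interior_subset hx₀⟩
  have hfin : ∀ i, EMetric.hausdorffEdist (K i) L ≠ ⊤ := fun i =>
    Metric.hausdorffEdist_ne_top_of_nonempty_of_bounded ⟨x i, hx i⟩ hLne
      (hKc i).isBounded hLc.isBounded
  have hxyev : ∀ᶠ i in atTop, x i ≠ y i := by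
    have hd : Tendsto (fun i => dist (x i) (y i)) atTop (𝓝 (dist x₀ y₀)) := hxlim.dist hylim
    filter_upwards [hd.eventually_const_lt (dist_pos.2 hne)] with i hi
    exact fun h => by rw [h] at hi; simp at hi
  set T₀ := chordT L x₀ y₀ with hT₀def
  have hT₀mem : T₀ ∈ lineS L x₀ y₀ := chordT_mem_lineS hLc (interior_subset hy₀) hne
  have hT₀1 : 1 < T₀ := one_lt_chordT hLc hy₀ hne
  rw [tendsto_order]
  constructor
  · intro a ha
    set t := (max a 0 + T₀)/2 with htdef
    have hmax0 : 0 ≤ max a 0 := le_max_right a 0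
    have hmaxT : max a 0 < T₀ := max_lt ha (by linarith)
    have h0t : 0 ≤ t := by rw [htdef]; linarith
    have htT : t < T₀ := by rw [htdef]; linarith
    have hat : a < t := by
      have := le_max_left a 0
      rw [htdef]; linarith
    have hT₀0 : T₀ ≠ 0 := by positivity
    have hzrep : x₀ + t • (y₀ - x₀)
        = (1 - t/T₀) • x₀ + (t/T₀) • (x₀ + T₀ • (y₀ - x₀)) := by
      have key : (1 - t/T₀) • x₀ + (t/T₀) • (x₀ + T₀ • (y₀ - x₀))
          = x₀ + ((t/T₀) * T₀) • (y₀ - x₀) := by module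
      rw [key, div_mul_cancel₀ _ hT₀0]
    have hz : x₀ + t • (y₀ - x₀) ∈ interior L := by
      rw [hzrep]
      refine hLconv.combo_interior_closure_mem_interior hx₀ (subset_closure hT₀mem) ?_
        (by positivity) (by ring)
      have : t/T₀ < 1 := (div_lt_one (by linarith)).2 htT
      linarith
    obtain ⟨r, hr, hballz⟩ := Metric.isOpen_iff.1 isOpen_interior _ hz
    have hball_L : Metric.ball (x₀ + t • (y₀ - x₀)) r ⊆ L := hballz.trans interior_subset
    have hev1 : ∀ᶠ i in atTop, Metric.hausdorffDist (K i) L < r/4 :=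
      hgc.eventually_lt_const (by linarith)
    have hwlim : Tendsto (fun i => x i + t • (y i - x i)) atTop
        (𝓝 (x₀ + t • (y₀ - x₀))) := hxlim.add ((hylim.sub hxlim).const_smul t)
    have hev2 : ∀ᶠ i in atTop,
        dist (x i + t • (y i - x i)) (x₀ + t • (y₀ - x₀)) < r/2 :=
      Metric.tendsto_nhds.1 hwlim (r/2) (by linarith)
    filter_upwards [hev1, hev2, hxyev] with i h1 h2 h3
    have hsub : Metric.ball (x₀ + t • (y₀ - x₀)) (r - 2*(r/4)) ⊆ K i :=
      ball_subset_of_hausdorffDist_lt (hKc i) (hKconv i) ⟨x i, hx i⟩ hLc.isBounded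
        (by linarith) hball_L (by rw [Metric.hausdorffDist_comm]; exact h1)
    have hwK : x i + t • (y i - x i) ∈ K i := by
      apply hsub
      rw [Metric.mem_ball]
      have : r - 2*(r/4) = r/2 := by ring
      rw [this]
      exact h2
    have hts : t ∈ lineS (K i) (x i) (y i) := hwK
    have := le_csSup (lineS_bddAbove (hKc i).isBounded h3) hts
    exact lt_of_lt_of_le hat this
  · intro a ha
    have ha0 : (0:ℝ) ≤ a := by linarith
    have hza : x₀ + a • (y₀ - x₀) ∉ L :=
      chordT_lt_of_not_mem (lineS_bddAbove hLc.isBounded hne) ha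
    set δ := Metric.infDist (x₀ + a • (y₀ - x₀)) L with hδdef
    have hδ : 0 < δ := (hLc.isClosed.notMem_iff_infDist_pos hLne).1 hza
    have hev1 : ∀ᶠ i in atTop, Metric.hausdorffDist (K i) L < δ/2 :=
      hgc.eventually_lt_const (by linarith)
    have hwlim : Tendsto (fun i => x i + a • (y i - x i)) atTop
        (𝓝 (x₀ + a • (y₀ - x₀))) := hxlim.add ((hylim.sub hxlim).const_smul a)
    have hev2 : ∀ᶠ i in atTop,
        dist (x i + a • (y i - x i)) (x₀ + a • (y₀ - x₀)) < δ/2 :=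
      Metric.tendsto_nhds.1 hwlim (δ/2) (by linarith)
    filter_upwards [hev1, hev2, hxyev] with i h1 h2 h3
    rw [dist_comm] at h2
    by_contra hcon
    push_neg at hcon
    have haS : a ∈ lineS (K i) (x i) (y i) := by
      have hseg : segment ℝ (0:ℝ) (chordT (K i) (x i) (y i)) ⊆ lineS (K i) (x i) (y i) :=
        (lineS_convex (hKconv i) _ _).segment_subset (zero_mem_lineS (hx i))
          (chordT_mem_lineS (hKc i) (interior_subset (hy i)) h3)
      apply hseg
      rw [segment_eq_Icc (by linarith : (0:ℝ) ≤ chordT (K i) (x i) (y i))]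
      exact ⟨ha0, hcon⟩
    have hwK : x i + a • (y i - x i) ∈ K i := haS
    have h4 : Metric.infDist (x i + a • (y i - x i)) L ≤ Metric.hausdorffDist (K i) L :=
      Metric.infDist_le_hausdorffDist_of_mem hwK (hfin i)
    have h5 : δ ≤ Metric.infDist (x i + a • (y i - x i)) L
        + dist (x₀ + a • (y₀ - x₀)) (x i + a • (y i - x i)) :=
      Metric.infDist_le_infDist_add_dist
    linarith

lemma ratio_bounds {d1 d2 δ m : ℝ} (hm : 0 < m) (h1 : m ≤ d1) (h2 : m ≤ d2)
    (htri1 : d2 ≤ d1 + δ) (htri2 : d1 ≤ d2 + δ) (hδ : 0 ≤ δ) :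
    1 - δ/m ≤ d2 / d1 ∧ d2 / d1 ≤ 1 + δ/m := by
  have hd1 : 0 < d1 := lt_of_lt_of_le hm h1
  have he : δ/m * d1 * m = δ * d1 := by field_simp
  have hmul : δ * m ≤ δ * d1 := by nlinarith
  have hX : δ ≤ δ/m * d1 := by nlinarith
  constructor
  · rw [le_div_iff₀ hd1]
    nlinarith
  · rw [div_le_iff₀ hd1]
    nlinarith

end Aux

set_option maxHeartbeats 1000000 in
/-- Hilbert metrics converge under geometric convergence: if properly convex compact domains
`K i` converge in the Hausdorff metric to a properly convex compact domain `L`, and points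
`x i, y i` in the interiors of the `K i` converge to points `x₀, y₀` of the interior of `L`,
then the Hilbert distances `d_{K i°}(x i, y i)` converge to `d_{L°}(x₀, y₀)`. -/
theorem hilbert_dist_converges {n : ℕ}
    (K : ℕ → Set (EuclideanSpace ℝ (Fin n))) (L : Set (EuclideanSpace ℝ (Fin n)))
    (hKc : ∀ i, IsCompact (K i)) (hKconv : ∀ i, Convex ℝ (K i))
    (hKint : ∀ i, (interior (K i)).Nonempty)
    (hLc : IsCompact L) (hLconv : Convex ℝ L) (hLint : (interior L).Nonempty)
    (dK : ℕ → EuclideanSpace ℝ (Fin n) → EuclideanSpace ℝ (Fin n) → ℝ)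
    (dL : EuclideanSpace ℝ (Fin n) → EuclideanSpace ℝ (Fin n) → ℝ)
    (hdK : ∀ i, IsHilbertDistOn (interior (K i)) (dK i))
    (hdL : IsHilbertDistOn (interior L) dL)
    (hgc : Tendsto (fun i => Metric.hausdorffDist (K i) L) atTop (𝓝 0))
    (x y : ℕ → EuclideanSpace ℝ (Fin n)) (x₀ y₀ : EuclideanSpace ℝ (Fin n))
    (hx : ∀ i, x i ∈ interior (K i)) (hy : ∀ i, y i ∈ interior (K i))
    (hx₀ : x₀ ∈ interior L) (hy₀ : y₀ ∈ interior L)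
    (hxlim : Tendsto x atTop (𝓝 x₀)) (hylim : Tendsto y atTop (𝓝 y₀)) :
    Tendsto (fun i => dK i (x i) (y i)) atTop (𝓝 (dL x₀ y₀)) := by
  have hLne : L.Nonempty := ⟨x₀, interior_subset hx₀⟩
  by_cases hxy : x₀ = y₀
  · -- the limits coincide: squeeze argument
    subst hxy
    rw [hdL.1 x₀ hx₀]
    obtain ⟨r, hr, hballL⟩ := Metric.isOpen_iff.1 isOpen_interior _ hx₀
    have hballL' : Metric.ball x₀ r ⊆ L := hballL.trans interior_subset
    have hδlim : Tendsto (fun i => dist (x i) (y i)) atTop (𝓝 0) := by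
      have := hxlim.dist hylim
      simpa using this
    set m := 3*r/8 with hmdef
    have hm0 : 0 < m := by rw [hmdef]; linarith
    have hlow : Tendsto (fun i => 2 * Real.log (1 - dist (x i) (y i) / m)) atTop (𝓝 0) := by
      have h1 : Tendsto (fun i => 1 - dist (x i) (y i) / m) atTop (𝓝 1) := by
        have := (hδlim.div_const m).const_sub 1
        simpa using this
      have h2 := (h1.log (by norm_num)).const_mul 2
      simpa using h2
    have hup : Tendsto (fun i => 2 * Real.log (1 + dist (x i) (y i) / m)) atTop (𝓝 0) := by
      have h1 : Tendsto (fun i => 1 + dist (x i) (y i) / m) atTop (𝓝 1) := by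
        have := (hδlim.div_const m).const_add 1
        simpa using this
      have h2 := (h1.log (by norm_num)).const_mul 2
      simpa using h2
    have hev : ∀ᶠ i in atTop,
        2 * Real.log (1 - dist (x i) (y i) / m) ≤ dK i (x i) (y i) ∧
        dK i (x i) (y i) ≤ 2 * Real.log (1 + dist (x i) (y i) / m) := by
      have hevH : ∀ᶠ i in atTop, Metric.hausdorffDist (K i) L < r/4 :=
        hgc.eventually_lt_const (by linarith)
      have hevx : ∀ᶠ i in atTop, dist (x i) x₀ < r/8 :=
        Metric.tendsto_nhds.1 hxlim _ (by linarith)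
      have hevy : ∀ᶠ i in atTop, dist (y i) x₀ < r/8 :=
        Metric.tendsto_nhds.1 hylim _ (by linarith)
      filter_upwards [hevH, hevx, hevy] with i h1 h2 h3
      have hKball : Metric.ball x₀ (r/2) ⊆ K i := by
        have hb := ball_subset_of_hausdorffDist_lt (hKc i) (hKconv i)
          ⟨x i, interior_subset (hx i)⟩ hLc.isBounded (show (0:ℝ) < r/4 by linarith)
          hballL' (by rw [Metric.hausdorffDist_comm]; exact h1)
        have : r - 2*(r/4) = r/2 := by ring
        rwa [this] at hb
      have hKball' : Metric.ball x₀ (r/2) ⊆ interior (K i) :=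
        interior_maximal hKball Metric.isOpen_ball
      set δ := dist (x i) (y i) with hδdef
      have hδ0 : (0:ℝ) ≤ δ := dist_nonneg
      have hδsmall : δ < r/4 := by
        have := dist_triangle_right (x i) (y i) x₀
        rw [hδdef]
        linarith
      have hpos : 0 < 1 - δ/m := by
        have : δ/m < 1 := (div_lt_one hm0).2 (by rw [hmdef]; linarith)
        linarith
      by_cases hxyi : x i = y i
      · have hzero : dK i (x i) (y i) = 0 := by
          rw [hxyi]
          exact (hdK i).1 (y i) (hy i)
        have hδeq : δ = 0 := by rw [hδdef, hxyi, dist_self]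
        rw [hzero, hδeq]
        norm_num
      · set s := chordEnd (K i) (x i) (y i) with hsdef
        set o := chordEnd (K i) (y i) (x i) with hodef
        have hs_f : s ∈ frontier (interior (K i)) :=
          chordEnd_mem_frontier (hKc i) (hKconv i) (hx i) (hy i) hxyi
        have ho_f : o ∈ frontier (interior (K i)) :=
          chordEnd_mem_frontier (hKc i) (hKconv i) (hy i) (hx i) (Ne.symm hxyi)
        have hyos : y i ∈ openSegment ℝ (x i) s :=
          mem_openSegment_chordEnd (hKc i) (hy i) hxyi
        have hxos : x i ∈ openSegment ℝ o (y i) := by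
          rw [openSegment_symm]
          exact mem_openSegment_chordEnd (hKc i) (hx i) (Ne.symm hxyi)
        have hform := (hdK i).2 (x i) (hx i) (y i) (hy i) hxyi o s ho_f hs_f hxos hyos
        have hdist_lb : ∀ z : EuclideanSpace ℝ (Fin n), z ∈ frontier (interior (K i)) →
            ∀ w : EuclideanSpace ℝ (Fin n), dist w x₀ < r/8 → m ≤ dist z w := by
          intro z hz w hw
          have hznotint : z ∉ interior (K i) := by
            rw [frontier, isOpen_interior.interior_eq] at hz
            exact hz.2
          have h5 : r/2 ≤ dist z x₀ := by
            by_contra hcl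
            push_neg at hcl
            exact hznotint (hKball' (by rwa [Metric.mem_ball]))
          have h6 := dist_triangle z w x₀
          rw [hmdef]
          linarith
        have ha1 : m ≤ dist o (x i) := hdist_lb o ho_f (x i) h2
        have ha2 : m ≤ dist o (y i) := hdist_lb o ho_f (y i) h3
        have hb1 : m ≤ dist s (x i) := hdist_lb s hs_f (x i) h2
        have hb2 : m ≤ dist s (y i) := hdist_lb s hs_f (y i) h3
        have htriA1 : dist o (y i) ≤ dist o (x i) + δ := by
          rw [hδdef]; exact dist_triangle o (x i) (y i)
        have htriA2 : dist o (x i) ≤ dist o (y i) + δ := by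
          rw [hδdef, dist_comm (x i) (y i)]; exact dist_triangle o (y i) (x i)
        have htriB1 : dist s (x i) ≤ dist s (y i) + δ := by
          rw [hδdef, dist_comm (x i) (y i)]; exact dist_triangle s (y i) (x i)
        have htriB2 : dist s (y i) ≤ dist s (x i) + δ := by
          rw [hδdef]; exact dist_triangle s (x i) (y i)
        obtain ⟨hA1, hA2⟩ := ratio_bounds hm0 ha1 ha2 htriA1 htriA2 hδ0
        obtain ⟨hB1, hB2⟩ := ratio_bounds hm0 hb2 hb1 htriB1 htriB2 hδ0
        set A := dist o (y i) / dist o (x i) with hAdef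
        set B := dist s (x i) / dist s (y i) with hBdef
        have hA0 : 0 < A := lt_of_lt_of_le hpos hA1
        have hB0 : 0 < B := lt_of_lt_of_le hpos hB1
        have hABlow : (1 - δ/m)^2 ≤ A * B := by nlinarith
        have hABup : A * B ≤ (1 + δ/m)^2 := by nlinarith
        rw [hform]
        constructor
        · calc 2 * Real.log (1 - δ/m) = Real.log ((1 - δ/m)^2) := by
                rw [Real.log_pow]; norm_num
          _ ≤ Real.log (A * B) := by
                rw [Real.log_le_log_iff (pow_pos hpos 2) (mul_pos hA0 hB0)]
                exact hABlow
        · calc Real.log (A * B) ≤ Real.log ((1 + δ/m)^2) := by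
                rw [Real.log_le_log_iff (mul_pos hA0 hB0)
                  (pow_pos (by linarith : (0:ℝ) < 1 + δ/m) 2)]
                exact hABup
          _ = 2 * Real.log (1 + δ/m) := by rw [Real.log_pow]; norm_num
    exact tendsto_of_tendsto_of_tendsto_of_le_of_le' hlow hup
      (hev.mono fun i hi => hi.1) (hev.mono fun i hi => hi.2)
  · -- distinct limits: endpoints of chords converge
    have hxyev : ∀ᶠ i in atTop, x i ≠ y i := by
      have hd : Tendsto (fun i => dist (x i) (y i)) atTop (𝓝 (dist x₀ y₀)) := hxlim.dist hylim
      filter_upwards [hd.eventually_const_lt (dist_pos.2 hxy)] with i hi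
      exact fun h => by rw [h] at hi; simp at hi
    have hTs := chordT_tendsto hKc hKconv hLc hLconv hgc
      (fun i => interior_subset (hx i)) hy hx₀ hy₀ hxlim hylim hxy
    have hTo := chordT_tendsto hKc hKconv hLc hLconv hgc
      (fun i => interior_subset (hy i)) hx hy₀ hx₀ hylim hxlim (Ne.symm hxy)
    have hslim : Tendsto (fun i => chordEnd (K i) (x i) (y i)) atTop
        (𝓝 (chordEnd L x₀ y₀)) := by
      simp only [chordEnd]
      exact hxlim.add (hTs.smul (hylim.sub hxlim))
    have holim : Tendsto (fun i => chordEnd (K i) (y i) (x i)) atTop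
        (𝓝 (chordEnd L y₀ x₀)) := by
      simp only [chordEnd]
      exact hylim.add (hTo.smul (hxlim.sub hylim))
    set o₀ := chordEnd L y₀ x₀ with ho₀def
    set s₀ := chordEnd L x₀ y₀ with hs₀def
    have ho₀f : o₀ ∈ frontier (interior L) :=
      chordEnd_mem_frontier hLc hLconv hy₀ hx₀ (Ne.symm hxy)
    have hs₀f : s₀ ∈ frontier (interior L) :=
      chordEnd_mem_frontier hLc hLconv hx₀ hy₀ hxy
    have hnotint : ∀ z : EuclideanSpace ℝ (Fin n),
        z ∈ frontier (interior L) → z ∉ interior L := by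
      intro z hz
      rw [frontier, isOpen_interior.interior_eq] at hz
      exact hz.2
    have hox : dist o₀ x₀ ≠ 0 := by
      rw [dist_ne_zero]
      exact fun h => hnotint o₀ ho₀f (h ▸ hx₀)
    have hoy : dist o₀ y₀ ≠ 0 := by
      rw [dist_ne_zero]
      exact fun h => hnotint o₀ ho₀f (h ▸ hy₀)
    have hsx : dist s₀ x₀ ≠ 0 := by
      rw [dist_ne_zero]
      exact fun h => hnotint s₀ hs₀f (h ▸ hx₀)
    have hsy : dist s₀ y₀ ≠ 0 := by
      rw [dist_ne_zero]
      exact fun h => hnotint s₀ hs₀f (h ▸ hy₀)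
    have hxos : x₀ ∈ openSegment ℝ o₀ y₀ := by
      rw [openSegment_symm]
      exact mem_openSegment_chordEnd hLc hx₀ (Ne.symm hxy)
    have hyos : y₀ ∈ openSegment ℝ x₀ s₀ := mem_openSegment_chordEnd hLc hy₀ hxy
    have hformL : dL x₀ y₀
        = Real.log ((dist o₀ y₀ / dist o₀ x₀) * (dist s₀ x₀ / dist s₀ y₀)) :=
      hdL.2 x₀ hx₀ y₀ hy₀ hxy o₀ s₀ ho₀f hs₀f hxos hyos
    have harg : Tendsto (fun i =>
          (dist (chordEnd (K i) (y i) (x i)) (y i) / dist (chordEnd (K i) (y i) (x i)) (x i))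
          * (dist (chordEnd (K i) (x i) (y i)) (x i)
            / dist (chordEnd (K i) (x i) (y i)) (y i))) atTop
        (𝓝 ((dist o₀ y₀ / dist o₀ x₀) * (dist s₀ x₀ / dist s₀ y₀))) :=
      (((holim.dist hylim).div (holim.dist hxlim) hox).mul
        ((hslim.dist hxlim).div (hslim.dist hylim) hsy))
    have hargne : (dist o₀ y₀ / dist o₀ x₀) * (dist s₀ x₀ / dist s₀ y₀) ≠ 0 := by
      have h1 : 0 < dist o₀ y₀ := lt_of_le_of_ne dist_nonneg (Ne.symm hoy)
      have h2 : 0 < dist o₀ x₀ := lt_of_le_of_ne dist_nonneg (Ne.symm hox)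
      have h3 : 0 < dist s₀ x₀ := lt_of_le_of_ne dist_nonneg (Ne.symm hsx)
      have h4 : 0 < dist s₀ y₀ := lt_of_le_of_ne dist_nonneg (Ne.symm hsy)
      positivity
    have hlog := harg.log hargne
    rw [hformL]
    apply hlog.congr'
    filter_upwards [hxyev] with i hnei
    have hsif : chordEnd (K i) (x i) (y i) ∈ frontier (interior (K i)) :=
      chordEnd_mem_frontier (hKc i) (hKconv i) (hx i) (hy i) hnei
    have hoif : chordEnd (K i) (y i) (x i) ∈ frontier (interior (K i)) :=
      chordEnd_mem_frontier (hKc i) (hKconv i) (hy i) (hx i) (Ne.symm hnei)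
    have hxosi : x i ∈ openSegment ℝ (chordEnd (K i) (y i) (x i)) (y i) := by
      rw [openSegment_symm]
      exact mem_openSegment_chordEnd (hKc i) (hx i) (Ne.symm hnei)
    have hyosi : y i ∈ openSegment ℝ (x i) (chordEnd (K i) (x i) (y i)) :=
      mem_openSegment_chordEnd (hKc i) (hy i) hnei
    exact ((hdK i).2 (x i) (hx i) (y i) (hy i) hnei _ _ hoif hsif hxosi hyosi).symm
end

section
/- For a properly convex open domain Ω in RP^n, the projection Π: Bd^Ag(Ω) → Bd(Ω) from the augmented boundary to the topological boundary, sending (x,h) to x, is a proper, surjective, continuous map; and the map D: Bd^Ag(Ω) → Bd^Ag(Ω*) sending (x,h) to (h,x) is a homeomorphism, where Ω* is the dual domain. -/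
open Set

variable {n : ℕ}

/-- The dual cone of a properly convex open cone `C ⊆ ℝ^{n+1}`. -/
def dualConeSet (C : Set (EuclideanSpace ℝ (Fin (n + 1)))) :
    Set (EuclideanSpace ℝ (Fin (n + 1)) →L[ℝ] ℝ) :=
  {φ | ∀ v ∈ closure C, v ≠ 0 → 0 < φ v}

/-- The augmented boundary of the properly convex domain `Ω` associated to the cone `C`,
modelled by unit representatives: pairs `(x, h)` of a unit vector `x` in the boundary of
the cone and a (normalized) supporting functional `h` of the cone at `x` (positive on `C`
and vanishing at `x`).  Each boundary point / supporting hyperplane of `Ω` has a unique such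
representative since `C` is properly convex. -/
def augBoundary (C : Set (EuclideanSpace ℝ (Fin (n + 1)))) :
    Set ((EuclideanSpace ℝ (Fin (n + 1))) × (EuclideanSpace ℝ (Fin (n + 1)) →L[ℝ] ℝ)) :=
  {p | ‖p.1‖ = 1 ∧ p.1 ∈ frontier C ∧ ‖p.2‖ = 1 ∧ (∀ w ∈ C, 0 < p.2 w) ∧ p.2 p.1 = 0}

/-- The boundary `Bd Ω`, modelled by unit vectors in the frontier of the cone `C`. -/
def bdDomain (C : Set (EuclideanSpace ℝ (Fin (n + 1)))) :
    Set (EuclideanSpace ℝ (Fin (n + 1))) :=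
  {v | ‖v‖ = 1 ∧ v ∈ frontier C}

/-- The augmented boundary of the dual domain `Ω*`: pairs `(h, x)` of a unit functional `h`
in the boundary of the dual cone and a unit vector `x` giving a supporting hyperplane of
`Ω*` at `h` (evaluation at `x` is positive on `C*` and vanishes at `h`). -/
def augBoundaryDual (C : Set (EuclideanSpace ℝ (Fin (n + 1)))) :
    Set ((EuclideanSpace ℝ (Fin (n + 1)) →L[ℝ] ℝ) × (EuclideanSpace ℝ (Fin (n + 1)))) :=
  {q | ‖q.1‖ = 1 ∧ q.1 ∈ frontier (dualConeSet C) ∧ ‖q.2‖ = 1 ∧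
    (∀ ψ ∈ dualConeSet C, 0 < ψ q.2) ∧ q.1 q.2 = 0}

section Aux

open scoped RealInnerProductSpace

local notation "E" => EuclideanSpace ℝ (Fin (n + 1))

/-- The inner dual cone of a set. -/
def Set.innerDualCone (s : Set E) : ConvexCone ℝ E where
  carrier := {y | ∀ x ∈ s, 0 ≤ ⟪x, y⟫}
  smul_mem' c hc y hy x hx := by
    rw [real_inner_smul_right]; exact mul_nonneg hc.le (hy x hx)
  add_mem' u hu v hv x hx := by
    rw [inner_add_right]; exact add_nonneg (hu x hx) (hv x hx)

@[simp] theorem mem_innerDualCone (y : E) (s : Set E) :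
    y ∈ s.innerDualCone ↔ ∀ x ∈ s, 0 ≤ ⟪x, y⟫ := Iff.rfl

theorem ConvexCone.innerDualCone_of_innerDualCone_eq_self (K : ConvexCone ℝ E)
    (ne : (K : Set E).Nonempty) (hc : IsClosed (K : Set E)) :
    ((K : Set E).innerDualCone : Set E).innerDualCone = K := by
  have hpt : K.Pointed := by
    obtain ⟨x, hx⟩ := ne
    have htend : Filter.Tendsto (fun k : ℕ => (1 / ((k : ℝ) + 1)) • x) Filter.atTop (nhds 0) := by
      have := (tendsto_one_div_add_atTop_nhds_zero_nat (𝕜 := ℝ)).smul_const x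
      simpa using this
    exact hc.mem_of_tendsto htend (Filter.Eventually.of_forall fun k => K.smul_mem (by positivity) hx)
  let P : ProperCone ℝ E := { toSubmodule := K.toPointedCone hpt, isClosed' := hc }
  have h := ProperCone.innerDual_innerDual P
  ext y
  exact SetLike.ext_iff.mp h y

/-- A continuous linear functional nonnegative on an open set and vanishing at a point of it
is zero. -/
lemma aux_zero_of_nonneg (φ : E →L[ℝ] ℝ) {U : Set E} (hU : IsOpen U) {w : E} (hw : w ∈ U)
    (hpos : ∀ u ∈ U, 0 ≤ φ u) (hφw : φ w = 0) : φ = 0 := by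
  ext u
  obtain ⟨r, hr, hball⟩ := Metric.isOpen_iff.mp hU w hw
  set δ : ℝ := r / (2 * (‖u‖ + 1)) with hδ
  have hδpos : 0 < δ := by positivity
  have hnorm : ‖u‖ ≥ 0 := norm_nonneg u
  have hmem : ∀ s : ℝ, |s| ≤ δ → w + s • u ∈ U := by
    intro s hs
    apply hball
    rw [Metric.mem_ball, dist_eq_norm]
    have : w + s • u - w = s • u := by abel
    rw [this, norm_smul, Real.norm_eq_abs]
    have h1 : |s| * ‖u‖ ≤ δ * ‖u‖ := mul_le_mul_of_nonneg_right hs hnorm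
    have h2 : δ * ‖u‖ < r := by
      rw [hδ]
      rw [div_mul_eq_mul_div, div_lt_iff₀ (by positivity)]
      nlinarith
    exact lt_of_le_of_lt h1 h2
  have h1 : 0 ≤ φ (w + δ • u) := hpos _ (hmem δ (by rw [abs_of_pos hδpos]))
  have h2 : 0 ≤ φ (w + (-δ) • u) := hpos _ (hmem (-δ) (by rw [abs_neg, abs_of_pos hδpos]))
  rw [map_add, map_smul, hφw, smul_eq_mul, zero_add] at h1
  rw [map_add, map_smul, hφw, smul_eq_mul, zero_add] at h2
  have hφu : φ u = 0 := by nlinarith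
  simp [hφu]

lemma aux_closure_cone {C : Set E} (hcone : ∀ v ∈ C, ∀ t : ℝ, 0 < t → t • v ∈ C)
    {v : E} (hv : v ∈ closure C) {t : ℝ} (ht : 0 < t) : t • v ∈ closure C := by
  have hc : Continuous fun x : E => t • x := continuous_const_smul t
  have h1 : (fun x : E => t • x) '' closure C ⊆ closure ((fun x : E => t • x) '' C) :=
    image_closure_subset_closure_image hc
  have h2 : (fun x : E => t • x) '' C ⊆ C := by
    rintro _ ⟨w, hw, rfl⟩
    exact hcone w hw t ht
  exact closure_mono h2 (h1 ⟨v, hv, rfl⟩)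

lemma aux_zero_mem_closure {C : Set E} (hne : C.Nonempty)
    (hcone : ∀ v ∈ C, ∀ t : ℝ, 0 < t → t • v ∈ C) : (0 : E) ∈ closure C := by
  obtain ⟨x, hx⟩ := hne
  have htend : Filter.Tendsto (fun k : ℕ => (1 / ((k : ℝ) + 1)) • x) Filter.atTop (nhds 0) := by
    have := (tendsto_one_div_add_atTop_nhds_zero_nat (𝕜 := ℝ)).smul_const x
    simpa using this
  refine mem_closure_of_tendsto htend (Filter.Eventually.of_forall fun k => ?_)
  exact hcone x hx _ (by positivity)

/-- Existence of a strictly positive functional on the closure of a properly convex cone. -/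
lemma aux_exists_phi0 {C : Set E} (hne : C.Nonempty) (hconv : Convex ℝ C)
    (hcone : ∀ v ∈ C, ∀ t : ℝ, 0 < t → t • v ∈ C)
    (hproper : closure C ∩ -closure C ⊆ {0}) :
    ∃ φ₀ : E →L[ℝ] ℝ, φ₀ ∈ dualConeSet C := by
  classical
  have hzero : (0 : E) ∈ closure C := aux_zero_mem_closure hne hcone
  -- the closure of C as a convex cone
  let K : ConvexCone ℝ E :=
    { carrier := closure C
      smul_mem' := fun t ht v hv => aux_closure_cone hcone hv ht
      add_mem' := by
        intro a ha b hb
        have hmid : (1/2 : ℝ) • a + (1/2 : ℝ) • b ∈ closure C := by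
          have := hconv.closure ha hb (by norm_num : (0:ℝ) ≤ 1/2) (by norm_num : (0:ℝ) ≤ 1/2)
            (by norm_num)
          simpa using this
        have := aux_closure_cone hcone hmid (by norm_num : (0:ℝ) < 2)
        have heq : (2 : ℝ) • ((1/2 : ℝ) • a + (1/2 : ℝ) • b) = a + b := by
          rw [smul_add, smul_smul, smul_smul]; norm_num
        rwa [heq] at this }
  have hKne : ((K : Set E)).Nonempty := ⟨0, hzero⟩
  have hKc : IsClosed (K : Set E) := isClosed_closure
  have hbip := K.innerDualCone_of_innerDualCone_eq_self hKne hKc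
  set D : ConvexCone ℝ E := ((K : Set E)).innerDualCone with hD
  have hDne : ((D : Set E)).Nonempty := ⟨0, by simp [hD]⟩
  -- the affine span of D is everything
  have hspan : affineSpan ℝ ((D : Set E)) = ⊤ := by
    by_contra hnot
    rw [AffineSubspace.affineSpan_eq_top_iff_vectorSpan_eq_top_of_nonempty ℝ E E hDne] at hnot
    have hbot : (vectorSpan ℝ ((D : Set E)))ᗮ ≠ ⊥ := fun hb =>
      hnot (Submodule.orthogonal_eq_bot_iff.mp hb)
    obtain ⟨u, huO, hu0⟩ := Submodule.exists_mem_ne_zero_of_ne_bot hbot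
    have hperp : ∀ y ∈ (D : Set E), ⟪y, u⟫ = 0 := by
      intro y hy
      have hyv : y ∈ vectorSpan ℝ ((D : Set E)) := by
        have h0D : (0 : E) ∈ (D : Set E) := by simp [hD]
        have := vsub_mem_vectorSpan ℝ hy h0D
        simpa using this
      exact (Submodule.mem_orthogonal _ u).mp huO y hyv
    have humem : u ∈ ((D : Set E)).innerDualCone := by
      rw [mem_innerDualCone]
      intro x hx
      rw [hperp x hx]
    have hnegmem : -u ∈ ((D : Set E)).innerDualCone := by
      rw [mem_innerDualCone]
      intro x hx
      rw [inner_neg_right, hperp x hx, neg_zero]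
    rw [hD, hbip] at humem hnegmem
    have : u ∈ closure C ∩ -closure C := ⟨humem, Set.mem_neg.mpr hnegmem⟩
    exact hu0 (hproper this)
  -- D has nonempty interior
  obtain ⟨e₀, he₀⟩ := (D.convex).interior_nonempty_iff_affineSpan_eq_top.mpr hspan
  refine ⟨innerSL ℝ e₀, ?_⟩
  intro v hv hv0
  have hnonneg : 0 ≤ ⟪v, e₀⟫ := by
    have he₀D : e₀ ∈ (D : Set E) := interior_subset he₀
    exact (mem_innerDualCone _ _).mp he₀D v hv
  rcases lt_or_eq_of_le hnonneg with h | h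
  · rw [innerSL_apply_apply, real_inner_comm]; exact h
  · exfalso
    obtain ⟨r, hr, hball⟩ := Metric.isOpen_iff.mp isOpen_interior e₀ he₀
    set δ : ℝ := r / (2 * (‖v‖ + 1)) with hδ
    have hδpos : 0 < δ := by positivity
    have hmem : e₀ - δ • v ∈ (D : Set E) := by
      apply interior_subset
      apply hball
      rw [Metric.mem_ball, dist_eq_norm]
      have : e₀ - δ • v - e₀ = -(δ • v) := by abel
      rw [this, norm_neg, norm_smul, Real.norm_eq_abs, abs_of_pos hδpos, hδ,
        div_mul_eq_mul_div, div_lt_iff₀ (by positivity)]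
      nlinarith [norm_nonneg v, hr]
    have := (mem_innerDualCone _ _).mp hmem v hv
    rw [inner_sub_right, real_inner_smul_right, ← h] at this
    have hvv : 0 < ⟪v, v⟫ := by
      have hn : (0:ℝ) < ‖v‖ := norm_pos_iff.mpr hv0
      rw [real_inner_self_eq_norm_mul_norm]
      exact mul_pos hn hn
    nlinarith

/-- Existence of a normalized supporting functional at a boundary point. -/
lemma aux_exists_support {C : Set E} (hopen : IsOpen C) (hne : C.Nonempty) (hconv : Convex ℝ C)
    (hcone : ∀ v ∈ C, ∀ t : ℝ, 0 < t → t • v ∈ C)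
    {x : E} (hx : x ∈ frontier C) :
    ∃ h : E →L[ℝ] ℝ, ‖h‖ = 1 ∧ (∀ w ∈ C, 0 < h w) ∧ h x = 0 := by
  have hxcl : x ∈ closure C := frontier_subset_closure hx
  have hxC : x ∉ C := by
    intro hxC
    exact hx.2 (by rwa [hopen.interior_eq])
  obtain ⟨f, hf⟩ := geometric_hahn_banach_open_point hconv hopen hxC
  have hzero : (0 : E) ∈ closure C := aux_zero_mem_closure hne hcone
  -- f x ≥ 0
  have hfx_nonneg : 0 ≤ f x := by
    have hsub : closure C ⊆ {y | f y ≤ f x} := by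
      apply closure_minimal
      · intro a ha; exact (hf a ha).le
      · exact isClosed_le f.continuous continuous_const
    have := hsub hzero
    simpa using this
  -- f ≤ 0 on C
  have hfC_nonpos : ∀ a ∈ C, f a ≤ 0 := by
    intro a ha
    by_contra hpos
    push_neg at hpos
    have ht : (0 : ℝ) < (f x + 1) / f a := by positivity
    have := hf _ (hcone a ha _ ht)
    rw [map_smul, smul_eq_mul, div_mul_cancel₀ _ (ne_of_gt hpos)] at this
    linarith
  -- f x ≤ 0
  have hfx_nonpos : f x ≤ 0 := by
    have hsub : closure C ⊆ {y | f y ≤ 0} := by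
      apply closure_minimal hfC_nonpos
      exact isClosed_le f.continuous continuous_const
    exact hsub hxcl
  have hfx : f x = 0 := le_antisymm hfx_nonpos hfx_nonneg
  -- f < 0 on C
  have hfC_neg : ∀ a ∈ C, f a < 0 := fun a ha => hfx ▸ hf a ha
  have hfne : f ≠ 0 := by
    obtain ⟨a, ha⟩ := hne
    intro h0
    have := hfC_neg a ha
    rw [h0] at this
    simp at this
  have hfnorm : ‖f‖ ≠ 0 := by simpa [norm_eq_zero] using hfne
  refine ⟨‖f‖⁻¹ • (-f), ?_, ?_, ?_⟩
  · rw [norm_smul (‖f‖⁻¹) (-f), norm_neg, norm_inv, norm_norm]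
    field_simp
  · intro w hw
    have := hfC_neg w hw
    simp only [ContinuousLinearMap.smul_apply, ContinuousLinearMap.neg_apply, smul_eq_mul]
    have : 0 < -f w := by linarith
    have hpos : 0 < ‖f‖⁻¹ := by positivity
    positivity
  · simp [hfx]

end Aux

/-- For a properly convex open domain `Ω` (given by the properly convex open cone `C`):
the projection `Π : Bd^Ag Ω → Bd Ω`, `(x,h) ↦ x`, is a continuous, surjective, proper map;
and the map `D : (x,h) ↦ (h,x)` is a homeomorphism from `Bd^Ag Ω` onto `Bd^Ag Ω*`,
the augmented boundary of the dual domain. -/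
theorem augmented_boundary_projection_and_duality
    (C : Set (EuclideanSpace ℝ (Fin (n + 1))))
    (hopen : IsOpen C) (hne : C.Nonempty) (hconv : Convex ℝ C)
    (hcone : ∀ v ∈ C, ∀ t : ℝ, 0 < t → t • v ∈ C)
    (hproper : closure C ∩ -closure C ⊆ {0}) :
    (∀ p ∈ augBoundary C, p.1 ∈ bdDomain C) ∧
    (∀ b ∈ bdDomain C, ∃ p ∈ augBoundary C, p.1 = b) ∧
    Continuous (fun p : augBoundary C => (p.1).1) ∧
    IsProperMap (fun p : augBoundary C => (p.1).1) ∧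
    ∃ D : augBoundary C ≃ₜ augBoundaryDual C,
      ∀ p : augBoundary C, (D p).1 = ((p.1).2, (p.1).1) := by
  classical
  obtain ⟨φ₀, hφ₀⟩ := aux_exists_phi0 hne hconv hcone hproper
  -- nonneg extension to closure
  have hext : ∀ (h : EuclideanSpace ℝ (Fin (n+1)) →L[ℝ] ℝ), (∀ w ∈ C, 0 ≤ h w) →
      ∀ v ∈ closure C, 0 ≤ h v := by
    intro h hh
    have : closure C ⊆ {v | 0 ≤ h v} :=
      closure_minimal hh (isClosed_le continuous_const h.continuous)
    exact fun v hv => this hv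
  -- nonneg on open C plus norm one implies strictly positive on C
  have hstrict : ∀ (h : EuclideanSpace ℝ (Fin (n+1)) →L[ℝ] ℝ), ‖h‖ = 1 →
      (∀ w ∈ C, 0 ≤ h w) → ∀ w ∈ C, 0 < h w := by
    intro h hn hh w hw
    rcases lt_or_eq_of_le (hh w hw) with hlt | heq
    · exact hlt
    · exfalso
      have := aux_zero_of_nonneg h hopen hw hh heq.symm
      rw [this] at hn
      simp at hn
  -- (1) the projection lands in bdDomain
  have part1 : ∀ p ∈ augBoundary C, p.1 ∈ bdDomain C := by
    intro p hp
    exact ⟨hp.1, hp.2.1⟩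
  -- (2) surjectivity
  have part2 : ∀ b ∈ bdDomain C, ∃ p ∈ augBoundary C, p.1 = b := by
    intro b hb
    obtain ⟨h, hn, hpos, hval⟩ := aux_exists_support hopen hne hconv hcone hb.2
    exact ⟨(b, h), ⟨hb.1, hb.2, hn, hpos, hval⟩, rfl⟩
  -- continuity of the projection
  have hcont : Continuous (fun p : augBoundary C => (p.1).1) :=
    continuous_fst.comp continuous_subtype_val
  -- compactness of the augmented boundary
  have haug_eq : augBoundary C =
      {p : (EuclideanSpace ℝ (Fin (n+1))) × (EuclideanSpace ℝ (Fin (n+1)) →L[ℝ] ℝ) |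
        ‖p.1‖ = 1 ∧ p.1 ∈ frontier C ∧ ‖p.2‖ = 1 ∧ (∀ w ∈ C, 0 ≤ p.2 w) ∧ p.2 p.1 = 0} := by
    ext p
    constructor
    · rintro ⟨h1, h2, h3, h4, h5⟩
      exact ⟨h1, h2, h3, fun w hw => (h4 w hw).le, h5⟩
    · rintro ⟨h1, h2, h3, h4, h5⟩
      exact ⟨h1, h2, h3, hstrict _ h3 h4, h5⟩
  have hclosed : IsClosed (augBoundary C) := by
    rw [haug_eq]
    have c1 : IsClosed {p : (EuclideanSpace ℝ (Fin (n+1))) ×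
        (EuclideanSpace ℝ (Fin (n+1)) →L[ℝ] ℝ) | ‖p.1‖ = 1} :=
      isClosed_eq (continuous_norm.comp continuous_fst) continuous_const
    have c2 : IsClosed {p : (EuclideanSpace ℝ (Fin (n+1))) ×
        (EuclideanSpace ℝ (Fin (n+1)) →L[ℝ] ℝ) | p.1 ∈ frontier C} :=
      isClosed_frontier.preimage continuous_fst
    have c3 : IsClosed {p : (EuclideanSpace ℝ (Fin (n+1))) ×
        (EuclideanSpace ℝ (Fin (n+1)) →L[ℝ] ℝ) | ‖p.2‖ = 1} :=
      isClosed_eq (continuous_norm.comp continuous_snd) continuous_const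
    have c4 : IsClosed {p : (EuclideanSpace ℝ (Fin (n+1))) ×
        (EuclideanSpace ℝ (Fin (n+1)) →L[ℝ] ℝ) | ∀ w ∈ C, 0 ≤ p.2 w} := by
      have : {p : (EuclideanSpace ℝ (Fin (n+1))) ×
          (EuclideanSpace ℝ (Fin (n+1)) →L[ℝ] ℝ) | ∀ w ∈ C, 0 ≤ p.2 w} =
          ⋂ w ∈ C, {p : (EuclideanSpace ℝ (Fin (n+1))) ×
          (EuclideanSpace ℝ (Fin (n+1)) →L[ℝ] ℝ) | 0 ≤ p.2 w} := by
        ext p; simp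
      rw [this]
      apply isClosed_biInter
      intro w _
      exact isClosed_le continuous_const
        (((ContinuousLinearMap.apply ℝ ℝ w).continuous).comp continuous_snd)
    have c5 : IsClosed {p : (EuclideanSpace ℝ (Fin (n+1))) ×
        (EuclideanSpace ℝ (Fin (n+1)) →L[ℝ] ℝ) | p.2 p.1 = 0} := by
      have hcont5 : Continuous fun p : (EuclideanSpace ℝ (Fin (n+1))) ×
          (EuclideanSpace ℝ (Fin (n+1)) →L[ℝ] ℝ) => p.2 p.1 := by
        have := isBoundedBilinearMap_apply
          (𝕜 := ℝ) (E := EuclideanSpace ℝ (Fin (n+1))) (F := ℝ) |>.continuous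
        exact this.comp (continuous_snd.prodMk continuous_fst)
      exact isClosed_eq hcont5 continuous_const
    have heq : {p : (EuclideanSpace ℝ (Fin (n+1))) ×
        (EuclideanSpace ℝ (Fin (n+1)) →L[ℝ] ℝ) |
        ‖p.1‖ = 1 ∧ p.1 ∈ frontier C ∧ ‖p.2‖ = 1 ∧ (∀ w ∈ C, 0 ≤ p.2 w) ∧ p.2 p.1 = 0} =
        {p | ‖p.1‖ = 1} ∩ ({p | p.1 ∈ frontier C} ∩ ({p | ‖p.2‖ = 1} ∩
          ({p | ∀ w ∈ C, 0 ≤ p.2 w} ∩ {p | p.2 p.1 = 0}))) := by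
      ext p; simp [and_assoc]
    rw [heq]
    exact c1.inter (c2.inter (c3.inter (c4.inter c5)))
  have hbounded : Bornology.IsBounded (augBoundary C) := by
    have hsub : augBoundary C ⊆ Metric.closedBall 0 1 ×ˢ Metric.closedBall 0 1 := by
      rintro p ⟨h1, _, h3, _, _⟩
      constructor
      · rw [Metric.mem_closedBall, dist_zero_right, h1]
      · rw [Metric.mem_closedBall, dist_zero_right, h3]
    exact (Metric.isBounded_closedBall.prod Metric.isBounded_closedBall).subset hsub
  have hcompact : IsCompact (augBoundary C) :=
    Metric.isCompact_of_isClosed_isBounded hclosed hbounded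
  haveI : CompactSpace (augBoundary C) := isCompact_iff_compactSpace.mp hcompact
  have hproperMap : IsProperMap (fun p : augBoundary C => (p.1).1) := hcont.isProperMap
  -- duality
  have hfwd : ∀ p ∈ augBoundary C, ((p.2, p.1) : (EuclideanSpace ℝ (Fin (n+1)) →L[ℝ] ℝ) ×
      (EuclideanSpace ℝ (Fin (n+1)))) ∈ augBoundaryDual C := by
    rintro p ⟨h1, h2, h3, h4, h5⟩
    have hx_cl : p.1 ∈ closure C := frontier_subset_closure h2
    have hx_ne : p.1 ≠ 0 := by
      intro h0; rw [h0] at h1; simp at h1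
    have hnonneg : ∀ v ∈ closure C, 0 ≤ p.2 v := hext p.2 (fun w hw => (h4 w hw).le)
    have hnotdual : p.2 ∉ dualConeSet C := by
      intro hmem
      have := hmem p.1 hx_cl hx_ne
      rw [h5] at this
      exact lt_irrefl 0 this
    have hcl : p.2 ∈ closure (dualConeSet C) := by
      have htend : Filter.Tendsto
          (fun k : ℕ => p.2 + (1 / ((k : ℝ) + 1)) • φ₀) Filter.atTop (nhds p.2) := by
        have h0 := (tendsto_one_div_add_atTop_nhds_zero_nat (𝕜 := ℝ)).smul_const φ₀
        rw [zero_smul] at h0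
        have := h0.const_add p.2
        simpa using this
      refine mem_closure_of_tendsto htend (Filter.Eventually.of_forall fun k => ?_)
      intro v hv hv0
      have hp : (0:ℝ) < 1 / ((k : ℝ) + 1) := by positivity
      simp only [ContinuousLinearMap.add_apply, ContinuousLinearMap.coe_smul',
        Pi.smul_apply, smul_eq_mul]
      have := hφ₀ v hv hv0
      have := hnonneg v hv
      nlinarith
    have hfront : p.2 ∈ frontier (dualConeSet C) := by
      rw [← closure_diff_interior]
      exact ⟨hcl, fun hint => hnotdual (interior_subset hint)⟩
    refine ⟨h3, hfront, h1, ?_, h5⟩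
    intro ψ hψ
    exact hψ p.1 hx_cl hx_ne
  have hbwd : ∀ q ∈ augBoundaryDual C, ((q.2, q.1) : (EuclideanSpace ℝ (Fin (n+1))) ×
      (EuclideanSpace ℝ (Fin (n+1)) →L[ℝ] ℝ)) ∈ augBoundary C := by
    rintro q ⟨h1, h2, h3, h4, h5⟩
    set h := q.1
    set x := q.2
    -- h is nonnegative on closure C
    have hclosed' : IsClosed {φ : EuclideanSpace ℝ (Fin (n+1)) →L[ℝ] ℝ |
        ∀ v ∈ closure C, 0 ≤ φ v} := by
      have heq : {φ : EuclideanSpace ℝ (Fin (n+1)) →L[ℝ] ℝ | ∀ v ∈ closure C, 0 ≤ φ v} =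
          ⋂ v ∈ closure C, {φ : EuclideanSpace ℝ (Fin (n+1)) →L[ℝ] ℝ | 0 ≤ φ v} := by
        ext φ; simp
      rw [heq]
      apply isClosed_biInter
      intro v _
      exact isClosed_le continuous_const (ContinuousLinearMap.apply ℝ ℝ v).continuous
    have hsub' : dualConeSet C ⊆ {φ : EuclideanSpace ℝ (Fin (n+1)) →L[ℝ] ℝ |
        ∀ v ∈ closure C, 0 ≤ φ v} := by
      intro φ hφ v hv
      by_cases hv0 : v = 0
      · rw [hv0]; simp
      · exact (hφ v hv hv0).le
    have hh_nonneg : ∀ v ∈ closure C, 0 ≤ h v := by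
      have := closure_minimal hsub' hclosed' (frontier_subset_closure h2)
      exact this
    have hh_ne : h ≠ 0 := by
      intro h0; rw [h0] at h1; simp at h1
    -- x ∈ closure C
    have hx_cl : x ∈ closure C := by
      by_contra hx_not
      obtain ⟨f, u, hfx, hfb⟩ :=
        geometric_hahn_banach_point_closed hconv.closure isClosed_closure hx_not
      have hzero : (0 : EuclideanSpace ℝ (Fin (n+1))) ∈ closure C :=
        aux_zero_mem_closure hne hcone
      have hu_neg : u < 0 := by
        have := hfb 0 hzero
        simpa using this
      have hf_nonneg : ∀ b ∈ closure C, 0 ≤ f b := by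
        intro b hb
        by_contra hneg
        push_neg at hneg
        have ht : (0:ℝ) < 2 * u / f b := div_pos_of_neg_of_neg (by linarith) hneg
        have := hfb _ (aux_closure_cone hcone hb ht)
        rw [map_smul, smul_eq_mul, div_mul_cancel₀ _ (ne_of_lt hneg)] at this
        linarith
      set ε : ℝ := (-(f x)) / (2 * (|φ₀ x| + 1)) with hε
      have hfx_neg : f x < 0 := lt_trans hfx hu_neg
      have hεpos : 0 < ε := by
        rw [hε]
        apply div_pos (by linarith) (by positivity)
      have hψ : f + ε • φ₀ ∈ dualConeSet C := by
        intro v hv hv0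
        simp only [ContinuousLinearMap.add_apply, ContinuousLinearMap.coe_smul',
          Pi.smul_apply, smul_eq_mul]
        have := hφ₀ v hv hv0
        have := hf_nonneg v hv
        nlinarith
      have hpos := h4 _ hψ
      simp only [ContinuousLinearMap.add_apply, ContinuousLinearMap.coe_smul',
        Pi.smul_apply, smul_eq_mul] at hpos
      have habs : φ₀ x ≤ |φ₀ x| := le_abs_self _
      have hbound : ε * φ₀ x ≤ ε * (|φ₀ x| + 1) :=
        mul_le_mul_of_nonneg_left (by linarith) hεpos.le
      have hcalc : ε * (|φ₀ x| + 1) = (-(f x)) / 2 := by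
        rw [hε]
        field_simp
      rw [hcalc] at hbound
      linarith
    -- x ∉ C
    have hx_notC : x ∉ C := by
      intro hxC
      have := aux_zero_of_nonneg h hopen hxC
        (fun w hw => hh_nonneg w (subset_closure hw)) h5
      exact hh_ne this
    have hx_front : x ∈ frontier C := by
      rw [hopen.frontier_eq]
      exact ⟨hx_cl, hx_notC⟩
    refine ⟨h3, hx_front, h1, ?_, h5⟩
    exact hstrict h h1 (fun w hw => hh_nonneg w (subset_closure hw))
  let Dmap : augBoundary C ≃ₜ augBoundaryDual C :=
    { toFun := fun p => ⟨(p.1.2, p.1.1), hfwd p.1 p.2⟩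
      invFun := fun q => ⟨(q.1.2, q.1.1), hbwd q.1 q.2⟩
      left_inv := fun p => Subtype.ext rfl
      right_inv := fun q => Subtype.ext rfl
      continuous_toFun := by
        apply Continuous.subtype_mk
        exact (continuous_snd.comp continuous_subtype_val).prodMk
          (continuous_fst.comp continuous_subtype_val)
      continuous_invFun := by
        apply Continuous.subtype_mk
        exact (continuous_snd.comp continuous_subtype_val).prodMk
          (continuous_fst.comp continuous_subtype_val) }
  exact ⟨part1, part2, hcont, hproperMap, ⟨Dmap, fun p => rfl⟩⟩
end

section
/- If Ω1 and Ω2 are properly convex open domains in RP^n that are dual to each other, then Ω1 is strictly convex with C^1 boundary if and only if Ω2 is strictly convex with C^1 boundary. -/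
open Set

variable {n : ℕ}

/-- The projective domain associated to the cone `C` is strictly convex: the boundary contains
no nondegenerate segment, i.e. the open segment between two non-proportional nonzero boundary
vectors of the cone lies inside the open cone. -/
def IsStrictlyConvexCone {W : Type*} [AddCommGroup W] [Module ℝ W] [TopologicalSpace W]
    (C : Set W) : Prop :=
  ∀ x ∈ frontier C, ∀ y ∈ frontier C, x ≠ 0 → y ≠ 0 → (∀ t : ℝ, y ≠ t • x) →
    openSegment ℝ x y ⊆ C

/-- The boundary of the projective domain associated to the cone `C` is `C¹`: at every nonzero
boundary vector the supporting hyperplane is unique, i.e. any two functionals positive on `C`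
and vanishing at the boundary point are proportional. -/
def HasC1BoundaryCone (C : Set (EuclideanSpace ℝ (Fin (n + 1)))) : Prop :=
  ∀ x ∈ frontier C, x ≠ 0 →
    ∀ φ ψ : EuclideanSpace ℝ (Fin (n + 1)) →L[ℝ] ℝ,
      (φ x = 0 ∧ ∀ w ∈ C, 0 < φ w) → (ψ x = 0 ∧ ∀ w ∈ C, 0 < ψ w) →
      ∃ c : ℝ, 0 < c ∧ ψ = c • φ

/-- The boundary of the dual projective domain (associated to a cone `D` of functionals) is
`C¹`: at every nonzero boundary functional the supporting hyperplane — given by evaluation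
at a vector of `ℝ^{n+1}` under the double-dual identification — is unique up to positive
scalar. -/
def HasC1BoundaryDualCone (D : Set (EuclideanSpace ℝ (Fin (n + 1)) →L[ℝ] ℝ)) : Prop :=
  ∀ φ ∈ frontier D, φ ≠ 0 →
    ∀ v w : EuclideanSpace ℝ (Fin (n + 1)),
      (φ v = 0 ∧ ∀ ψ ∈ D, 0 < ψ v) → (φ w = 0 ∧ ∀ ψ ∈ D, 0 < ψ w) →
      ∃ c : ℝ, 0 < c ∧ w = c • v

section AuxLemmas

variable {C : Set (EuclideanSpace ℝ (Fin (n + 1)))}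

/-- The closure of a cone is a cone. -/
lemma aux_smul_closure (hcone : ∀ v ∈ C, ∀ t : ℝ, 0 < t → t • v ∈ C)
    {t : ℝ} (ht : 0 < t) {v : EuclideanSpace ℝ (Fin (n + 1))} (hv : v ∈ closure C) :
    t • v ∈ closure C :=
  map_mem_closure (continuous_const_smul t) hv (fun w hw => hcone w hw t ht)

/-- `0` belongs to the closure of a nonempty cone. -/
lemma aux_zero_mem (hne : C.Nonempty) (hcone : ∀ v ∈ C, ∀ t : ℝ, 0 < t → t • v ∈ C) :
    (0 : EuclideanSpace ℝ (Fin (n + 1))) ∈ closure C := by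
  obtain ⟨v, hv⟩ := hne
  have h : Filter.Tendsto (fun k : ℕ => (1 / (k + 1) : ℝ) • v) Filter.atTop
      (nhds ((0 : ℝ) • v)) := tendsto_one_div_add_atTop_nhds_zero_nat.smul_const v
  rw [zero_smul] at h
  exact mem_closure_of_tendsto h (Filter.Eventually.of_forall fun k =>
    hcone v hv _ (by positivity))

/-- A functional nonnegative on `C` is nonnegative on its closure. -/
lemma aux_nonneg_closure {φ : EuclideanSpace ℝ (Fin (n + 1)) →L[ℝ] ℝ}
    (h : ∀ w ∈ C, 0 ≤ φ w) {v : EuclideanSpace ℝ (Fin (n + 1))} (hv : v ∈ closure C) :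
    0 ≤ φ v :=
  closure_minimal (fun w hw => h w hw) (isClosed_le continuous_const φ.continuous) hv

/-- A nonzero functional nonnegative on an open set is positive there. -/
lemma aux_pos (hopen : IsOpen C) {φ : EuclideanSpace ℝ (Fin (n + 1)) →L[ℝ] ℝ}
    (hφ : ∀ w ∈ C, 0 ≤ φ w) (hφ0 : φ ≠ 0)
    {w : EuclideanSpace ℝ (Fin (n + 1))} (hw : w ∈ C) : 0 < φ w := by
  rcases (hφ w hw).lt_or_eq with h | h
  · exact h
  exfalso
  obtain ⟨u, hu⟩ : ∃ u, φ u ≠ 0 := by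
    by_contra h'
    push_neg at h'
    exact hφ0 (ContinuousLinearMap.ext fun u => by simp [h' u])
  have key : ∃ u', φ u' < 0 := by
    rcases hu.lt_or_gt with h1 | h1
    · exact ⟨u, h1⟩
    · exact ⟨-u, by simpa using h1⟩
  obtain ⟨u', hu'⟩ := key
  obtain ⟨ε, hε, hball⟩ := Metric.isOpen_iff.1 hopen w hw
  set δ : ℝ := ε / (2 * (‖u'‖ + 1)) with hδdef
  have hδ : 0 < δ := by positivity
  have hmem : w + δ • u' ∈ C := by
    apply hball
    rw [Metric.mem_ball, dist_eq_norm]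
    have h1 : w + δ • u' - w = δ • u' := by abel
    rw [h1, norm_smul, Real.norm_eq_abs, abs_of_pos hδ]
    have hn : (0:ℝ) ≤ ‖u'‖ := norm_nonneg _
    rw [hδdef, div_mul_eq_mul_div, div_lt_iff₀ (by positivity)]
    nlinarith
  have h2 := hφ _ hmem
  rw [map_add, map_smul, smul_eq_mul] at h2
  nlinarith [mul_pos hδ (neg_pos.2 hu')]

/-- Supporting functional at a boundary point of an open convex cone. -/
lemma aux_support (hopen : IsOpen C) (hne : C.Nonempty) (hconv : Convex ℝ C)
    (hcone : ∀ v ∈ C, ∀ t : ℝ, 0 < t → t • v ∈ C)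
    {x : EuclideanSpace ℝ (Fin (n + 1))} (hx : x ∈ closure C) (hxC : x ∉ C) :
    ∃ φ : EuclideanSpace ℝ (Fin (n + 1)) →L[ℝ] ℝ, φ x = 0 ∧ ∀ w ∈ C, 0 < φ w := by
  obtain ⟨f, hf⟩ := geometric_hahn_banach_open_point hconv hopen hxC
  have hfle : ∀ a ∈ C, f a ≤ 0 := by
    intro a ha
    by_contra h
    push_neg at h
    set t : ℝ := (max (f x) 0 + 1) / f a with htdef
    have ht : 0 < t := by positivity
    have h2 := hf _ (hcone a ha t ht)
    rw [map_smul, smul_eq_mul, htdef, div_mul_cancel₀ _ h.ne'] at h2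
    have := le_max_left (f x) 0
    linarith
  have hfx_le : f x ≤ 0 :=
    closure_minimal (fun w hw => hfle w hw) (isClosed_le f.continuous continuous_const) hx
  have hfx_ge : 0 ≤ f x := by
    by_contra h
    push_neg at h
    obtain ⟨a, ha⟩ := hne
    rcases (hfle a ha).lt_or_eq with h1 | h1
    · have ht : 0 < f x / (2 * f a) := div_pos_iff.2 (Or.inr ⟨h, by linarith⟩)
      have h2 := hf _ (hcone a ha _ ht)
      have hcalc : f x / (2 * f a) * f a = f x / 2 := by
        field_simp [h1.ne]
      rw [map_smul, smul_eq_mul, hcalc] at h2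
      linarith
    · have := hf a ha
      rw [h1] at this
      linarith
  have hfx0 : f x = 0 := le_antisymm hfx_le hfx_ge
  have hfne : (-f : EuclideanSpace ℝ (Fin (n + 1)) →L[ℝ] ℝ) ≠ 0 := by
    intro h0
    obtain ⟨a, ha⟩ := hne
    have := hf a ha
    have hf0 : f = 0 := by
      have := congrArg Neg.neg h0
      simpa using this
    rw [hf0] at this
    simp at this
  refine ⟨-f, by simp [hfx0], ?_⟩
  intro w hw
  exact aux_pos hopen (fun a ha => by simpa using hfle a ha) hfne hw

/-- A proper closed cone admits a strictly positive functional. -/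
lemma aux_exists_pos (hopen : IsOpen C) (hne : C.Nonempty) (hconv : Convex ℝ C)
    (hcone : ∀ v ∈ C, ∀ t : ℝ, 0 < t → t • v ∈ C)
    (hproper : closure C ∩ -closure C ⊆ {0}) :
    ∃ φ₀ : EuclideanSpace ℝ (Fin (n + 1)) →L[ℝ] ℝ,
      ∀ v ∈ closure C, v ≠ 0 → 0 < φ₀ v := by
  have hKclosed : IsClosed (closure C) := isClosed_closure
  have hKconv : Convex ℝ (closure C) := hconv.closure
  have h0K : (0 : EuclideanSpace ℝ (Fin (n + 1))) ∈ closure C := aux_zero_mem hne hcone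
  set S := Metric.sphere (0 : EuclideanSpace ℝ (Fin (n + 1))) 1 ∩ closure C with hSdef
  have hScomp : IsCompact S := (isCompact_sphere 0 1).inter_right hKclosed
  have hsep : ∀ v ∈ S, ∃ f : EuclideanSpace ℝ (Fin (n + 1)) →L[ℝ] ℝ,
      (∀ a ∈ closure C, 0 ≤ f a) ∧ 0 < f v := by
    rintro v ⟨hvs, hvK⟩
    have hv0 : v ≠ 0 := by
      rw [mem_sphere_zero_iff_norm] at hvs
      intro h; rw [h] at hvs; simp at hvs
    have hvnK : v ∉ -closure C := by
      intro h
      exact hv0 (by simpa using hproper ⟨hvK, h⟩)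
    obtain ⟨f, u, hfa, hufv⟩ :=
      geometric_hahn_banach_closed_point hKconv.neg hKclosed.neg hvnK
    have hu0 : 0 < u := by
      have := hfa 0 (by rw [Set.mem_neg, neg_zero]; exact h0K)
      simpa using this
    have hfK : ∀ a ∈ closure C, 0 ≤ f a := by
      intro a ha
      by_contra h
      push_neg at h
      set t : ℝ := (u + 1) / (-f a) with htdef
      have ht : 0 < t := div_pos (by linarith) (by linarith)
      have hmem : t • (-a) ∈ -closure C := by
        rw [Set.mem_neg]
        have : -(t • -a) = t • a := by rw [smul_neg, neg_neg]
        rw [this]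
        exact aux_smul_closure hcone ht ha
      have h2 := hfa _ hmem
      rw [map_smul, smul_eq_mul, map_neg, htdef, div_mul_cancel₀ _ (by linarith : -f a ≠ 0)] at h2
      linarith
    exact ⟨f, hfK, lt_trans hu0 hufv⟩
  choose! f hf1 hf2 using hsep
  have hcover : S ⊆ ⋃ v : S, {w | 0 < f v w} := fun w hw =>
    Set.mem_iUnion.2 ⟨⟨w, hw⟩, hf2 w hw⟩
  obtain ⟨t, ht⟩ := hScomp.elim_finite_subcover (fun v : S => {w | 0 < f v w})
    (fun v => isOpen_lt continuous_const (f v).continuous) hcover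
  refine ⟨∑ v ∈ t, f v, ?_⟩
  intro v hvK hv0
  have hnv : (0:ℝ) < ‖v‖ := norm_pos_iff.2 hv0
  set uvec := ‖v‖⁻¹ • v with huvdef
  have huS : uvec ∈ S := by
    constructor
    · rw [mem_sphere_zero_iff_norm, huvdef, norm_smul, norm_inv, norm_norm]
      field_simp
    · exact aux_smul_closure hcone (inv_pos.2 hnv) hvK
  obtain ⟨i, hit, hiu⟩ := Set.mem_iUnion₂.1 (ht huS)
  have hupos : 0 < (∑ v ∈ t, f v) uvec := by
    rw [ContinuousLinearMap.sum_apply]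
    exact Finset.sum_pos' (fun j _ => hf1 j.1 j.2 uvec huS.2) ⟨i, hit, hiu⟩
  have hv_eq : v = ‖v‖ • uvec := (smul_inv_smul₀ hnv.ne' v).symm
  rw [hv_eq, map_smul, smul_eq_mul]
  exact mul_pos hnv hupos

/-- Every functional nonnegative on `closure C` lies in the closure of the dual cone. -/
lemma aux_mem_closure_dual (hopen : IsOpen C) (hne : C.Nonempty) (hconv : Convex ℝ C)
    (hcone : ∀ v ∈ C, ∀ t : ℝ, 0 < t → t • v ∈ C)
    (hproper : closure C ∩ -closure C ⊆ {0})
    {φ : EuclideanSpace ℝ (Fin (n + 1)) →L[ℝ] ℝ}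
    (hφ : ∀ v ∈ closure C, 0 ≤ φ v) : φ ∈ closure (dualConeSet C) := by
  obtain ⟨φ₀, hφ₀⟩ := aux_exists_pos hopen hne hconv hcone hproper
  have hseq : Filter.Tendsto (fun k : ℕ => φ + (1 / (k + 1) : ℝ) • φ₀) Filter.atTop
      (nhds (φ + (0 : ℝ) • φ₀)) :=
    (tendsto_one_div_add_atTop_nhds_zero_nat.smul_const φ₀).const_add φ
  rw [zero_smul, add_zero] at hseq
  refine mem_closure_of_tendsto hseq (Filter.Eventually.of_forall fun k => ?_)
  intro v hv hv0
  simp only [ContinuousLinearMap.add_apply, ContinuousLinearMap.coe_smul',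
    Pi.smul_apply, smul_eq_mul]
  have h1 := hφ v hv
  have h2 := hφ₀ v hv hv0
  have h3 : (0:ℝ) < 1 / ((k : ℝ) + 1) := by positivity
  nlinarith

end AuxLemmas

/-- If `Ω` and `Ω*` are dual properly convex open domains in `RP^n` (given by a properly
convex open cone `C ⊆ ℝ^{n+1}` and its dual cone `C*`), then `Ω` is strictly convex with
`C¹` boundary if and only if `Ω*` is strictly convex with `C¹` boundary. -/
theorem dual_strictly_convex_C1_iff (C : Set (EuclideanSpace ℝ (Fin (n + 1))))
    (hopen : IsOpen C) (hne : C.Nonempty) (hconv : Convex ℝ C)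
    (hcone : ∀ v ∈ C, ∀ t : ℝ, 0 < t → t • v ∈ C)
    (hproper : closure C ∩ -closure C ⊆ {0}) :
    (IsStrictlyConvexCone C ∧ HasC1BoundaryCone C) ↔
    (IsStrictlyConvexCone (dualConeSet C) ∧ HasC1BoundaryDualCone (dualConeSet C)) := by
  set D := dualConeSet C with hDdef
  obtain ⟨φ₀, hφ₀⟩ := aux_exists_pos hopen hne hconv hcone hproper
  have hφ₀D : φ₀ ∈ D := fun v hv hv0 => hφ₀ v hv hv0
  have h0K : (0 : EuclideanSpace ℝ (Fin (n + 1))) ∈ closure C := aux_zero_mem hne hcone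
  -- membership in the closure of D gives nonnegativity on closure C
  have hDsub : ∀ φ ∈ closure D, ∀ v ∈ closure C, 0 ≤ φ v := by
    intro φ hφ v hv
    have hcl : IsClosed {ψ : EuclideanSpace ℝ (Fin (n + 1)) →L[ℝ] ℝ | 0 ≤ ψ v} :=
      isClosed_le continuous_const ((ContinuousLinearMap.apply ℝ ℝ v).continuous)
    have hsub : D ⊆ {ψ : EuclideanSpace ℝ (Fin (n + 1)) →L[ℝ] ℝ | 0 ≤ ψ v} := by
      intro ψ hψ
      by_cases hv0 : v = 0
      · simp [hv0]
      · exact (hψ v hv hv0).le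
    exact closure_minimal hsub hcl hφ
  -- frontier of D: functionals nonneg on closure C
  have hfrD_nonneg : ∀ φ ∈ frontier D, ∀ v ∈ closure C, 0 ≤ φ v :=
    fun φ hφ => hDsub φ hφ.1
  -- conversely: nonneg on closure C and vanishing at a nonzero point of closure C ⇒ frontier
  have hfrD_mem : ∀ φ : EuclideanSpace ℝ (Fin (n + 1)) →L[ℝ] ℝ,
      (∀ v ∈ closure C, 0 ≤ φ v) →
      (∃ x, x ∈ closure C ∧ x ≠ 0 ∧ φ x = 0) → φ ∈ frontier D := by
    rintro φ hφ ⟨x, hx, hx0, hφx⟩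
    refine ⟨aux_mem_closure_dual hopen hne hconv hcone hproper hφ, ?_⟩
    intro hint
    have hmem : φ ∈ D := interior_subset hint
    have := hmem x hx hx0
    rw [hφx] at this
    exact lt_irrefl 0 this
  have hfrC : frontier C = closure C \ C := hopen.frontier_eq
  -- positivity on C of nonzero functionals nonneg on closure C
  have hposC : ∀ φ : EuclideanSpace ℝ (Fin (n + 1)) →L[ℝ] ℝ,
      (∀ v ∈ closure C, 0 ≤ φ v) → φ ≠ 0 → ∀ w ∈ C, 0 < φ w :=
    fun φ h h0 w hw => aux_pos hopen (fun a ha => h a (subset_closure ha)) h0 hw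
  -- nonzero functionals in frontier D vanish nowhere on C
  have hnotC : ∀ φ : EuclideanSpace ℝ (Fin (n + 1)) →L[ℝ] ℝ,
      (∀ v ∈ closure C, 0 ≤ φ v) → φ ≠ 0 → ∀ v ∈ closure C, φ v = 0 → v ∉ C := by
    intro φ h h0 v _ hφv hvC
    have := hposC φ h h0 v hvC
    rw [hφv] at this
    exact lt_irrefl 0 this
  -- a vector positive under all of D lies in closure C and is nonzero
  have hbipolar : ∀ v : EuclideanSpace ℝ (Fin (n + 1)),
      (∀ ψ ∈ D, 0 < ψ v) → v ∈ closure C ∧ v ≠ 0 := by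
    intro v hv
    have hv0 : v ≠ 0 := by
      intro h
      have := hv φ₀ hφ₀D
      rw [h] at this
      simp at this
    refine ⟨?_, hv0⟩
    by_contra hvK
    obtain ⟨g, u, hga, hugv⟩ :=
      geometric_hahn_banach_closed_point hconv.closure isClosed_closure hvK
    have hu0 : 0 < u := by have := hga 0 h0K; simpa using this
    have hgle : ∀ a ∈ closure C, g a ≤ 0 := by
      intro a ha
      by_contra h
      push_neg at h
      have ht : (0:ℝ) < (max u 0 + 1) / g a := by positivity
      have h2 := hga _ (aux_smul_closure hcone ht ha)
      rw [map_smul, smul_eq_mul, div_mul_cancel₀ _ h.ne'] at h2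
      have := le_max_left u 0
      linarith
    -- -g is nonneg on closure C; perturb into D and contradict hv
    set ε : ℝ := u / (2 * (|φ₀ v| + 1)) with hεdef
    have hε : 0 < ε := by positivity
    have hmemD : (-g + ε • φ₀) ∈ D := by
      intro w hw hw0
      simp only [ContinuousLinearMap.add_apply, ContinuousLinearMap.neg_apply,
        ContinuousLinearMap.coe_smul', Pi.smul_apply, smul_eq_mul]
      have h1 := hgle w hw
      have h2 := hφ₀ w hw hw0
      nlinarith
    have h3 := hv _ hmemD
    simp only [ContinuousLinearMap.add_apply, ContinuousLinearMap.neg_apply,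
      ContinuousLinearMap.coe_smul', Pi.smul_apply, smul_eq_mul] at h3
    have h4 : u < g v := hugv
    have h5 : ε * φ₀ v ≤ ε * |φ₀ v| := by
      have := le_abs_self (φ₀ v)
      nlinarith
    have h6 : ε * |φ₀ v| ≤ u / 2 := by
      rw [hεdef]
      rw [div_mul_eq_mul_div, div_le_div_iff₀ (by positivity) (by norm_num)]
      have := abs_nonneg (φ₀ v)
      nlinarith
    linarith
  constructor
  · rintro ⟨hA, hB⟩
    constructor
    · -- strict convexity of D, from C¹ boundary of C
      rintro φ hφf ψ hψf hφ0 hψ0 hnp χ ⟨a, b, ha, hb, hab, rfl⟩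
      have hφ' := hfrD_nonneg φ hφf
      have hψ' := hfrD_nonneg ψ hψf
      intro v hv hv0
      simp only [ContinuousLinearMap.add_apply, ContinuousLinearMap.coe_smul',
        Pi.smul_apply, smul_eq_mul]
      have h1 := hφ' v hv
      have h2 := hψ' v hv
      rcases lt_or_eq_of_le (by nlinarith : (0:ℝ) ≤ a * φ v + b * ψ v) with h | h
      · exact h
      exfalso
      have hφv : φ v = 0 := by nlinarith
      have hψv : ψ v = 0 := by nlinarith
      have hvfr : v ∈ frontier C := by
        rw [hfrC]
        exact ⟨hv, hnotC φ hφ' hφ0 v hv hφv⟩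
      obtain ⟨c, hc, hceq⟩ := hB v hvfr hv0 φ ψ ⟨hφv, hposC φ hφ' hφ0⟩ ⟨hψv, hposC ψ hψ' hψ0⟩
      exact hnp c hceq
    · -- C¹ boundary of D, from strict convexity of C
      rintro φ hφf hφ0 v w ⟨hφv, hvD⟩ ⟨hφw, hwD⟩
      obtain ⟨hvK, hv0⟩ := hbipolar v hvD
      obtain ⟨hwK, hw0⟩ := hbipolar w hwD
      have hφ' := hfrD_nonneg φ hφf
      have hvC : v ∉ C := hnotC φ hφ' hφ0 v hvK hφv
      have hwC : w ∉ C := hnotC φ hφ' hφ0 w hwK hφw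
      by_cases h : ∃ t : ℝ, w = t • v
      · obtain ⟨t, rfl⟩ := h
        refine ⟨t, ?_, rfl⟩
        rcases lt_trichotomy t 0 with h1 | h1 | h1
        · exfalso
          apply hw0
          have hmem : t • v ∈ -closure C := by
            rw [Set.mem_neg, ← neg_smul]
            exact aux_smul_closure hcone (by linarith : (0:ℝ) < -t) hvK
          simpa using hproper ⟨hwK, hmem⟩
        · exfalso; apply hw0; rw [h1, zero_smul]
        · exact h1
      · exfalso
        push_neg at h
        have hvfr : v ∈ frontier C := by rw [hfrC]; exact ⟨hvK, hvC⟩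
        have hwfr : w ∈ frontier C := by rw [hfrC]; exact ⟨hwK, hwC⟩
        have hseg := hA v hvfr w hwfr hv0 hw0 h
        have hmid : (1/2 : ℝ) • v + (1/2 : ℝ) • w ∈ openSegment ℝ v w :=
          ⟨1/2, 1/2, by norm_num, by norm_num, by norm_num, rfl⟩
        have hmemC := hseg hmid
        have hcontra := hposC φ hφ' hφ0 _ hmemC
        rw [map_add, map_smul, map_smul, hφv, hφw] at hcontra
        simp at hcontra
  · rintro ⟨hA', hB'⟩
    constructor
    · -- strict convexity of C, from C¹ boundary of D
      rintro x hxf y hyf hx0 hy0 hnp z ⟨a, b, ha, hb, hab, rfl⟩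
      rw [hfrC] at hxf hyf
      by_contra hzC
      have hzK : a • x + b • y ∈ closure C :=
        hconv.closure hxf.1 hyf.1 ha.le hb.le hab
      have hz0 : a • x + b • y ≠ 0 := by
        intro hzero
        have h2 : b • y = -(a • x) := eq_neg_of_add_eq_zero_right hzero
        have h1 : y = (-(b⁻¹ * a)) • x := by
          calc y = b⁻¹ • (b • y) := (inv_smul_smul₀ hb.ne' y).symm
            _ = b⁻¹ • (-(a • x)) := by rw [h2]
            _ = (-(b⁻¹ * a)) • x := by rw [smul_neg, smul_smul, neg_smul]
        exact hnp _ h1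
      obtain ⟨φ, hφz, hφpos⟩ := aux_support hopen hne hconv hcone hzK hzC
      have hφ' : ∀ u ∈ closure C, 0 ≤ φ u := fun u hu =>
        aux_nonneg_closure (fun p hp => (hφpos p hp).le) hu
      have hφx0 : 0 ≤ φ x := hφ' x hxf.1
      have hφy0 : 0 ≤ φ y := hφ' y hyf.1
      have hsum : a * φ x + b * φ y = 0 := by
        have := hφz
        rw [map_add, map_smul, map_smul, smul_eq_mul, smul_eq_mul] at this
        linarith
      have hφx : φ x = 0 := by nlinarith
      have hφy : φ y = 0 := by nlinarith
      have hφ0 : φ ≠ 0 := by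
        intro h
        obtain ⟨p, hp⟩ := hne
        have := hφpos p hp
        rw [h] at this
        simp at this
      have hφfr : φ ∈ frontier D := hfrD_mem φ hφ' ⟨x, hxf.1, hx0, hφx⟩
      obtain ⟨c, hc, hyx⟩ := hB' φ hφfr hφ0 x y
        ⟨hφx, fun ψ hψ => hψ x hxf.1 hx0⟩ ⟨hφy, fun ψ hψ => hψ y hyf.1 hy0⟩
      exact hnp c hyx
    · -- C¹ boundary of C, from strict convexity of D
      rintro x hxf hx0 φ ψ ⟨hφx, hφpos⟩ ⟨hψx, hψpos⟩
      rw [hfrC] at hxf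
      have hφ' : ∀ u ∈ closure C, 0 ≤ φ u := fun u hu =>
        aux_nonneg_closure (fun p hp => (hφpos p hp).le) hu
      have hψ' : ∀ u ∈ closure C, 0 ≤ ψ u := fun u hu =>
        aux_nonneg_closure (fun p hp => (hψpos p hp).le) hu
      obtain ⟨p, hp⟩ := hne
      have hφ0 : φ ≠ 0 := by
        intro h; have := hφpos p hp; rw [h] at this; simp at this
      have hψ0 : ψ ≠ 0 := by
        intro h; have := hψpos p hp; rw [h] at this; simp at this
      have hφfr : φ ∈ frontier D := hfrD_mem φ hφ' ⟨x, hxf.1, hx0, hφx⟩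
      have hψfr : ψ ∈ frontier D := hfrD_mem ψ hψ' ⟨x, hxf.1, hx0, hψx⟩
      by_cases h : ∃ t : ℝ, ψ = t • φ
      · obtain ⟨t, rfl⟩ := h
        refine ⟨t, ?_, rfl⟩
        have h1 := hψpos p hp
        simp only [ContinuousLinearMap.coe_smul', Pi.smul_apply, smul_eq_mul] at h1
        have h2 := hφpos p hp
        rcases mul_pos_iff.1 h1 with ⟨ht, _⟩ | ⟨_, hc⟩
        · exact ht
        · linarith
      · exfalso
        push_neg at h
        have hseg := hA' φ hφfr ψ hψfr hφ0 hψ0 h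
        have hmid : (1/2 : ℝ) • φ + (1/2 : ℝ) • ψ ∈ openSegment ℝ φ ψ :=
          ⟨1/2, 1/2, by norm_num, by norm_num, by norm_num, rfl⟩
        have hmem := hseg hmid x hxf.1 hx0
        simp only [ContinuousLinearMap.add_apply, ContinuousLinearMap.coe_smul',
          Pi.smul_apply, smul_eq_mul, hφx, hψx] at hmem
        linarith
end
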